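/- arXiv:2002.03670 — 7 statements merged into one kernel-verified Lean document; each statement's English description precedes it below -/
import Mathlib

section
/- Let G be a finite weighted tree on vertex set V and let v ∈ V. Then the reduced Laplacian L_v(G), obtained from the weighted Laplacian L(G) by deleting the row and column indexed by v, is invertible, and for all vertices i, j ≠ v the (i,j) entry of L_v(G)⁻¹ equals Σ_{e ∈ P_{i,j}} 1/w_e, where P_{i,j} is the set of edges lying both on the unique path from i to v and on the unique path from j to v. -/
open Finset Matrix

/-- The weighted Laplacian of a graph `G` with edge weights `w`. -/
def weightedLaplacian {V : Type*} [Fintype V] [DecidableEq V]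
    (G : SimpleGraph V) [DecidableRel G.Adj] (w : V → V → ℝ) : Matrix V V ℝ :=
  Matrix.of fun i j =>
    if i = j then ∑ k ∈ Finset.univ.filter (G.Adj i ·), w i k
    else if G.Adj i j then - w i j else 0

open SimpleGraph

section TreeAux

variable {V : Type*} [Fintype V] [DecidableEq V] {G : SimpleGraph V}

/-- The chosen (unique) path from `i` to `v` in the tree `G`. -/
noncomputable def tp (htree : G.IsTree) (v i : V) : G.Walk i v :=
  (htree.existsUnique_path i v).choose

lemma tp_isPath (htree : G.IsTree) (v i : V) : (tp htree v i).IsPath :=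
  (htree.existsUnique_path i v).choose_spec.1

lemma tp_unique (htree : G.IsTree) (v : V) {i : V} (p : G.Walk i v) (hp : p.IsPath) :
    p = tp htree v i :=
  (htree.existsUnique_path i v).choose_spec.2 p hp

/-- The edge set of the chosen path from `i` to `v`. -/
noncomputable def te (htree : G.IsTree) (v i : V) : Finset (Sym2 V) :=
  (tp htree v i).edges.toFinset

lemma te_self (htree : G.IsTree) (v : V) : te htree v v = ∅ := by
  rw [te, ← tp_unique htree v Walk.nil Walk.IsPath.nil]
  simp

lemma tp_cons (htree : G.IsTree) (v : V) {i : V} (hi : i ≠ v) :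
    ∃ (u : V) (h : G.Adj i u), tp htree v i = Walk.cons h (tp htree v u) := by
  obtain ⟨u, h, p', hp'⟩ := Walk.exists_eq_cons_of_ne hi (tp htree v i)
  have hpath : (Walk.cons h p').IsPath := hp' ▸ tp_isPath htree v i
  refine ⟨u, h, ?_⟩
  rw [hp', tp_unique htree v p' hpath.of_cons]

lemma te_head (htree : G.IsTree) (v : V) {i u : V} (h : G.Adj i u)
    (hcons : tp htree v i = Walk.cons h (tp htree v u)) (x : V) :
    s(i, x) ∈ te htree v i ↔ x = u := by
  have hpath := tp_isPath htree v i
  rw [hcons, Walk.cons_isPath_iff] at hpath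
  rw [te, hcons]
  simp only [Walk.edges_cons, List.toFinset_cons, Finset.mem_insert, List.mem_toFinset]
  constructor
  · rintro (heq | hmem)
    · exact Sym2.congr_right.mp heq
    · exact absurd (Walk.fst_mem_support_of_mem_edges _ hmem) hpath.2
  · rintro rfl; left; rfl

lemma te_subset_of_mem_support (htree : G.IsTree) (v : V) {i k : V}
    (hik : i ∈ (tp htree v k).support) : te htree v i ⊆ te htree v k := by
  have hd : (tp htree v k).dropUntil i hik = tp htree v i :=
    tp_unique htree v _ ((tp_isPath htree v k).dropUntil hik)
  rw [te, te, ← hd]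
  intro e he
  rw [List.mem_toFinset] at he ⊢
  exact Walk.edges_dropUntil_subset _ hik he

lemma mem_support_iff_head_mem (htree : G.IsTree) (v : V) {i u : V} (h : G.Adj i u)
    (hcons : tp htree v i = Walk.cons h (tp htree v u)) (k : V) :
    i ∈ (tp htree v k).support ↔ s(i, u) ∈ te htree v k := by
  constructor
  · intro hik
    apply te_subset_of_mem_support htree v hik
    rw [te, hcons]
    simp
  · intro he
    exact Walk.fst_mem_support_of_mem_edges _ (by simpa [te] using he)

lemma te_dichotomy (htree : G.IsTree) (v : V) {i u : V} (h : G.Adj i u) :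
    (s(i, u) ∉ te htree v u ∧ te htree v i = insert s(i, u) (te htree v u)) ∨
    (s(i, u) ∉ te htree v i ∧ te htree v u = insert s(i, u) (te htree v i)) := by
  by_cases hi : i ∈ (tp htree v u).support
  · right
    have hd : (tp htree v u).dropUntil i hi = tp htree v i :=
      tp_unique htree v _ ((tp_isPath htree v u).dropUntil hi)
    have htpath : ((tp htree v u).takeUntil i hi).IsPath := (tp_isPath htree v u).takeUntil hi
    have hcpath : (Walk.cons h.symm Walk.nil : G.Walk u i).IsPath := by
      rw [Walk.cons_isPath_iff]
      exact ⟨Walk.IsPath.nil, by simp [h.ne']⟩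
    have ht : (tp htree v u).takeUntil i hi = Walk.cons h.symm Walk.nil :=
      (htree.existsUnique_path u i).unique htpath hcpath
    have hconsu : tp htree v u = Walk.cons h.symm (tp htree v i) := by
      conv_lhs => rw [← Walk.take_spec (tp htree v u) hi]
      rw [ht, hd]
      rfl
    have hpath := tp_isPath htree v u
    rw [hconsu, Walk.cons_isPath_iff] at hpath
    constructor
    · intro hmem
      rw [te, List.mem_toFinset] at hmem
      exact hpath.2 (Walk.snd_mem_support_of_mem_edges _ hmem)
    · rw [te, te, hconsu]
      simp [Sym2.eq_swap]
  · left
    have hcpath : (Walk.cons h (tp htree v u)).IsPath := by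
      rw [Walk.cons_isPath_iff]
      exact ⟨tp_isPath htree v u, hi⟩
    have hconsi : tp htree v i = Walk.cons h (tp htree v u) :=
      (tp_unique htree v _ hcpath).symm
    constructor
    · intro hmem
      rw [te, List.mem_toFinset] at hmem
      exact hi (Walk.fst_mem_support_of_mem_edges _ hmem)
    · rw [te, te, hconsi]
      simp

lemma count_edges {v : V} {k : V} (p : G.Walk k v) (hp : p.IsPath) {i : V} (hiv : i ≠ v) :
    (p.edges.toFinset.filter (fun e => i ∈ e)).card =
      if i ∈ p.support then (if i = k then 1 else 2) else 0 := by
  induction p with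
  | nil => simp [hiv]
  | @cons k c _ h q ih =>
    have hq := hp.of_cons
    have hknot : k ∉ q.support := ((Walk.cons_isPath_iff h q).mp hp).2
    have hkc : k ≠ c := h.ne
    have hnin : s(k, c) ∉ q.edges.toFinset := by
      rw [List.mem_toFinset]
      intro hmem
      exact hknot (Walk.fst_mem_support_of_mem_edges q hmem)
    rw [Walk.edges_cons, List.toFinset_cons, Finset.filter_insert]
    simp only [Walk.support_cons, List.mem_cons]
    by_cases hik : i = k
    · subst hik
      have : i ∈ s(i, c) := by simp
      rw [if_pos this, Finset.card_insert_of_notMem (fun hx => hnin (Finset.mem_of_mem_filter _ hx))]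
      rw [ih hq hiv, if_neg hknot, if_pos (Or.inl rfl), if_pos rfl]
    · by_cases hic : i = c
      · subst hic
        have : i ∈ s(k, i) := by simp
        rw [if_pos this, Finset.card_insert_of_notMem (fun hx => hnin (Finset.mem_of_mem_filter _ hx))]
        rw [ih hq hiv, if_pos q.start_mem_support, if_pos rfl, if_pos (Or.inr q.start_mem_support), if_neg hik]
      · have : i ∉ s(k, c) := by simp [hik, hic]
        rw [if_neg this, ih hq hiv, if_neg hik]
        by_cases hmem : i ∈ q.support
        · rw [if_pos hmem, if_neg hic, if_pos (Or.inr hmem)]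
        · rw [if_neg hmem, if_neg (by rintro (h1 | h2); exact hik h1; exact hmem h2)]

end TreeAux

section Key

variable {V : Type*} [Fintype V] [DecidableEq V] {G : SimpleGraph V} [DecidableRel G.Adj]

lemma key_mul (htree : G.IsTree) (w : V → V → ℝ) (v : V) (f : Sym2 V → ℝ)
    (hf : ∀ a b : V, G.Adj a b → w a b * f s(a, b) = 1) :
    (weightedLaplacian G w).submatrix
        (fun i : {u : V // u ≠ v} => (i : V)) (fun j : {u : V // u ≠ v} => (j : V)) *
      Matrix.of (fun i j : {u : V // u ≠ v} => ∑ e ∈ te htree v i ∩ te htree v j, f e) = 1 := by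
  ext i k
  rw [Matrix.mul_apply]
  set g : V → ℝ := fun x => ∑ e ∈ te htree v x ∩ te htree v k.1, f e with hg
  set N := Finset.univ.filter (fun x => G.Adj i.1 x) with hN
  have hgv : g v = 0 := by simp [hg, te_self]
  have hsum1 : ∀ j : {u : V // u ≠ v},
      (weightedLaplacian G w).submatrix (fun a : {u : V // u ≠ v} => (a : V))
          (fun a : {u : V // u ≠ v} => (a : V)) i j *
        Matrix.of (fun a b : {u : V // u ≠ v} => ∑ e ∈ te htree v a ∩ te htree v b, f e) j k
      = weightedLaplacian G w i.1 j.1 * g j.1 := fun j => rfl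
  simp only [hsum1]
  have h1 : ∑ j : {u : V // u ≠ v}, weightedLaplacian G w i.1 j.1 * g j.1
      = ∑ x ∈ Finset.univ.erase v, weightedLaplacian G w i.1 x * g x := by
    rw [Finset.sum_subtype (p := fun x => x ≠ v) (Finset.univ.erase v)
      (fun x => by simp) (fun x => weightedLaplacian G w i.1 x * g x)]
  rw [h1, Finset.sum_erase_eq_sub (Finset.mem_univ v), hgv, mul_zero, sub_zero]
  have hdiag : weightedLaplacian G w i.1 i.1 = ∑ u ∈ N, w i.1 u := by
    simp [weightedLaplacian, hN]
  have hoff : ∀ x ∈ Finset.univ.erase i.1,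
      weightedLaplacian G w i.1 x * g x = if G.Adj i.1 x then -(w i.1 x * g x) else 0 := by
    intro x hx
    rw [Finset.mem_erase] at hx
    simp only [weightedLaplacian, Matrix.of_apply, if_neg (fun h : i.1 = x => hx.1 h.symm)]
    split_ifs <;> ring
  rw [← Finset.add_sum_erase _ _ (Finset.mem_univ i.1), Finset.sum_congr rfl hoff, hdiag]
  have hfe : (Finset.univ.erase i.1).filter (fun x => G.Adj i.1 x) = N := by
    ext x
    simp only [hN, Finset.mem_filter, Finset.mem_erase, Finset.mem_univ, true_and, and_true]
    exact ⟨fun h => h.2, fun h => ⟨h.ne', h⟩⟩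
  rw [← Finset.sum_filter, hfe]
  have hmain : (∑ u ∈ N, w i.1 u) * g i.1 + ∑ u ∈ N, -(w i.1 u * g u)
      = ∑ u ∈ N, w i.1 u * (g i.1 - g u) := by
    rw [Finset.sum_mul, ← Finset.sum_add_distrib]
    exact Finset.sum_congr rfl fun u _ => by ring
  rw [hmain]
  have hterm : ∀ u ∈ N, w i.1 u * (g i.1 - g u)
      = ((if s(i.1, u) ∈ te htree v i.1 ∩ te htree v k.1 then (1:ℝ) else 0)
        - (if s(i.1, u) ∈ te htree v u ∩ te htree v k.1 then (1:ℝ) else 0)) := by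
    intro u hu
    have hadj : G.Adj i.1 u := (Finset.mem_filter.mp hu).2
    have hf1 := hf _ _ hadj
    rcases te_dichotomy htree v hadj with ⟨hnm, heq⟩ | ⟨hnm, heq⟩
    · have hmi : s(i.1, u) ∈ te htree v i.1 := by rw [heq]; exact Finset.mem_insert_self _ _
      by_cases hek : s(i.1, u) ∈ te htree v k.1
      · have hii : te htree v i.1 ∩ te htree v k.1
            = insert s(i.1, u) (te htree v u ∩ te htree v k.1) := by
          rw [heq, Finset.insert_inter_of_mem hek]
        have hgd : g i.1 - g u = f s(i.1, u) := by
          simp only [hg]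
          rw [hii, Finset.sum_insert (fun hmem => hnm (Finset.mem_inter.mp hmem).1),
            add_sub_cancel_right]
        rw [hgd, hf1, if_pos (Finset.mem_inter.mpr ⟨hmi, hek⟩),
          if_neg (fun hmem => hnm (Finset.mem_inter.mp hmem).1)]
        norm_num
      · have hii : te htree v i.1 ∩ te htree v k.1 = te htree v u ∩ te htree v k.1 := by
          rw [heq, Finset.insert_inter_of_notMem hek]
        have hgd : g i.1 - g u = 0 := by simp only [hg]; rw [hii, sub_self]
        rw [hgd, mul_zero, if_neg (fun hmem => hek (Finset.mem_inter.mp hmem).2),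
          if_neg (fun hmem => hek (Finset.mem_inter.mp hmem).2)]
        norm_num
    · have hmu : s(i.1, u) ∈ te htree v u := by rw [heq]; exact Finset.mem_insert_self _ _
      by_cases hek : s(i.1, u) ∈ te htree v k.1
      · have hii : te htree v u ∩ te htree v k.1
            = insert s(i.1, u) (te htree v i.1 ∩ te htree v k.1) := by
          rw [heq, Finset.insert_inter_of_mem hek]
        have hgd : g i.1 - g u = -f s(i.1, u) := by
          simp only [hg]
          rw [hii, Finset.sum_insert (fun hmem => hnm (Finset.mem_inter.mp hmem).1)]
          ring
        rw [hgd, if_pos (Finset.mem_inter.mpr ⟨hmu, hek⟩),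
          if_neg (fun hmem => hnm (Finset.mem_inter.mp hmem).1)]
        rw [mul_neg, hf1]
        norm_num
      · have hii : te htree v u ∩ te htree v k.1 = te htree v i.1 ∩ te htree v k.1 := by
          rw [heq, Finset.insert_inter_of_notMem hek]
        have hgd : g i.1 - g u = 0 := by simp only [hg]; rw [← hii, sub_self]
        rw [hgd, mul_zero, if_neg (fun hmem => hek (Finset.mem_inter.mp hmem).2),
          if_neg (fun hmem => hek (Finset.mem_inter.mp hmem).2)]
        norm_num
  rw [Finset.sum_congr rfl hterm, Finset.sum_sub_distrib]
  obtain ⟨u₀, h₀, hcons⟩ := tp_cons htree v i.2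
  have hmemN : u₀ ∈ N := Finset.mem_filter.mpr ⟨Finset.mem_univ _, h₀⟩
  have hA : ∑ u ∈ N, (if s(i.1, u) ∈ te htree v i.1 ∩ te htree v k.1 then (1:ℝ) else 0)
      = if i.1 ∈ (tp htree v k.1).support then (1:ℝ) else 0 := by
    have hAterm : ∀ u ∈ N, (if s(i.1, u) ∈ te htree v i.1 ∩ te htree v k.1 then (1:ℝ) else 0)
        = if u = u₀ then (if i.1 ∈ (tp htree v k.1).support then (1:ℝ) else 0) else 0 := by
      intro u hu
      by_cases huu : u = u₀
      · subst huu
        have hiff : s(i.1, u) ∈ te htree v i.1 ∩ te htree v k.1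
            ↔ i.1 ∈ (tp htree v k.1).support := by
          rw [Finset.mem_inter, mem_support_iff_head_mem htree v h₀ hcons k.1]
          simp [(te_head htree v h₀ hcons u).mpr rfl]
        simp only [hiff]
        simp
      · rw [if_neg huu, if_neg]
        intro hmem
        exact huu ((te_head htree v h₀ hcons u).mp (Finset.mem_inter.mp hmem).1)
    rw [Finset.sum_congr rfl hAterm, Finset.sum_ite_eq' N u₀
      (fun _ => if i.1 ∈ (tp htree v k.1).support then (1:ℝ) else 0), if_pos hmemN]
  have hCT : ∀ u ∈ N, (if s(i.1, u) ∈ te htree v u ∩ te htree v k.1 then (1:ℝ) else 0)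
      = (if s(i.1, u) ∈ te htree v k.1 then (1:ℝ) else 0)
        - (if s(i.1, u) ∈ te htree v i.1 ∩ te htree v k.1 then (1:ℝ) else 0) := by
    intro u hu
    have hadj : G.Adj i.1 u := (Finset.mem_filter.mp hu).2
    rcases te_dichotomy htree v hadj with ⟨hnm, heq⟩ | ⟨hnm, heq⟩
    · have hmi : s(i.1, u) ∈ te htree v i.1 := by rw [heq]; exact Finset.mem_insert_self _ _
      simp [Finset.mem_inter, hnm, hmi]
    · have hmu : s(i.1, u) ∈ te htree v u := by rw [heq]; exact Finset.mem_insert_self _ _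
      simp [Finset.mem_inter, hnm, hmu]
  have hC : ∑ u ∈ N, (if s(i.1, u) ∈ te htree v u ∩ te htree v k.1 then (1:ℝ) else 0)
      = (∑ u ∈ N, (if s(i.1, u) ∈ te htree v k.1 then (1:ℝ) else 0))
        - ∑ u ∈ N, (if s(i.1, u) ∈ te htree v i.1 ∩ te htree v k.1 then (1:ℝ) else 0) := by
    rw [← Finset.sum_sub_distrib]
    exact Finset.sum_congr rfl hCT
  have hT : ∑ u ∈ N, (if s(i.1, u) ∈ te htree v k.1 then (1:ℝ) else 0)
      = (((te htree v k.1).filter (fun e => i.1 ∈ e)).card : ℝ) := by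
    rw [Finset.sum_boole]
    congr 1
    apply Finset.card_bij (fun u _ => s(i.1, u))
    · intro u hu
      rw [Finset.mem_filter] at hu
      exact Finset.mem_filter.mpr ⟨hu.2, by simp⟩
    · intro a ha b hb hab
      exact Sym2.congr_right.mp hab
    · intro e he
      rw [Finset.mem_filter] at he
      obtain ⟨he1, he2⟩ := he
      obtain ⟨b, rfl⟩ := Sym2.mem_iff_exists.mp he2
      have hadj : G.Adj i.1 b := by
        have := Walk.edges_subset_edgeSet (tp htree v k.1) (by simpa [te] using he1)
        rwa [SimpleGraph.mem_edgeSet] at this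
      exact ⟨b, Finset.mem_filter.mpr
        ⟨Finset.mem_filter.mpr ⟨Finset.mem_univ _, hadj⟩, he1⟩, rfl⟩
  have hcount : ((te htree v k.1).filter (fun e => i.1 ∈ e)).card
      = if i.1 ∈ (tp htree v k.1).support then (if i.1 = k.1 then 1 else 2) else 0 :=
    count_edges (tp htree v k.1) (tp_isPath htree v k.1) i.2
  rw [hC, hA, hT, hcount]
  rw [Matrix.one_apply]
  by_cases hik : i = k
  · subst hik
    rw [if_pos (Walk.start_mem_support _), if_pos rfl, if_pos rfl]
    norm_num
  · have hik' : i.1 ≠ k.1 := fun h => hik (Subtype.ext h)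
    rw [if_neg hik, if_neg hik']
    by_cases hs : i.1 ∈ (tp htree v k.1).support
    · rw [if_pos hs, if_pos hs]
      norm_num
    · rw [if_neg hs, if_neg hs]
      norm_num

end Key

/-- for a finite weighted tree `G` and a vertex `v`, the reduced Laplacian
`L_v(G)` (the Laplacian with the row and column of `v` deleted) is invertible, and the
`(i,j)` entry of its inverse equals `∑_{e ∈ P_{i,j}} 1/w_e`, where `P_{i,j}` is the set
of edges lying on both the (unique) path from `i` to `v` and the (unique) path from `j`
to `v`. -/
theorem reduced_laplacian_inverse_entries
    {V : Type*} [Fintype V] [DecidableEq V]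
    (G : SimpleGraph V) [DecidableRel G.Adj] (htree : G.IsTree)
    (w : V → V → ℝ) (hw : ∀ i j, w i j = w j i)
    (hpos : ∀ i j, G.Adj i j → 0 < w i j)
    (v : V) :
    IsUnit ((weightedLaplacian G w).submatrix
        (fun i : {u : V // u ≠ v} => (i : V)) (fun j : {u : V // u ≠ v} => (j : V))) ∧
    ∀ (i j : {u : V // u ≠ v}) (p : G.Walk (i : V) v) (q : G.Walk (j : V) v),
      p.IsPath → q.IsPath →
      ((weightedLaplacian G w).submatrix
          (fun i : {u : V // u ≠ v} => (i : V)) (fun j : {u : V // u ≠ v} => (j : V)))⁻¹ i j =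
        ∑ e ∈ p.edges.toFinset ∩ q.edges.toFinset,
          Sym2.lift ⟨fun a b => 1 / w a b,
            fun a b => by dsimp only; rw [hw a b]⟩ e := by
  have hf : ∀ a b : V, G.Adj a b →
      w a b * Sym2.lift ⟨fun a b => 1 / w a b,
        fun a b => by dsimp only; rw [hw a b]⟩ s(a, b) = 1 := by
    intro a b hab
    simp only [Sym2.lift_mk]
    rw [mul_one_div, div_self (ne_of_gt (hpos a b hab))]
  have hkey := key_mul htree w v _ hf
  refine ⟨(Matrix.isUnit_iff_isUnit_det _).mpr (Matrix.isUnit_det_of_right_inverse hkey), ?_⟩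
  intro i j p q hp hq
  have hp' : p.edges.toFinset = te htree v i.1 := by
    rw [tp_unique htree v p hp]; rfl
  have hq' : q.edges.toFinset = te htree v j.1 := by
    rw [tp_unique htree v q hq]; rfl
  rw [Matrix.inv_eq_right_inv hkey, hp', hq']
  rfl
end

section
/- Let G be a finite weighted tree with at least three leaves in which every non-leaf vertex has degree at least three, and let v_1, …, v_k (k ≥ 3) be an enumeration of its leaves. Then for distinct indices i₁, i₂ the leaves v_{i₁} and v_{i₂} are adjacent to a common vertex if and only if there exists a constant c ∈ ℝ such that d_G(v_{i₁}, v_j) − d_G(v_{i₂}, v_j) = c for every index j ∈ {1,…,k} \ {i₁, i₂}. -/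
open Finset

set_option linter.unusedSectionVars false

namespace LeafAux

open SimpleGraph

variable {V : Type*} [Fintype V] [DecidableEq V] {G : SimpleGraph V} [DecidableRel G.Adj]

lemma unique_nbr {x u s : V} (hx : G.degree x = 1) (hu : G.Adj x u) (hs : G.Adj x s) :
    s = u := by
  have hcard : (G.neighborFinset x).card ≤ 1 := by
    rw [G.card_neighborFinset_eq_degree, hx]
  exact Finset.card_le_one.mp hcard s (by simpa using hs) u (by simpa using hu)

variable (w : V → V → ℝ) (d : V → V → ℝ)

/-- abbreviation for the weight-sum of a walk -/
noncomputable def ws {a b : V} (p : G.Walk a b) : ℝ :=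
  (p.darts.map fun dd => 1 / w dd.toProd.1 dd.toProd.2).sum

lemma ws_cons {a b c : V} (h : G.Adj a b) (p : G.Walk b c) :
    ws w (Walk.cons h p) = 1 / w a b + ws w p := by
  simp [ws]

lemma ws_append {a b c : V} (p : G.Walk a b) (q : G.Walk b c) :
    ws w (p.append q) = ws w p + ws w q := by
  simp [ws, Walk.darts_append]

lemma ws_reverse (hw : ∀ a b, w a b = w b a) {a b : V} (p : G.Walk a b) :
    ws w p.reverse = ws w p := by
  rw [ws, Walk.darts_reverse, List.map_reverse, List.sum_reverse, List.map_map, ws]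
  refine congrArg List.sum (List.map_congr_left fun dd _ => ?_)
  simp [Dart.symm, hw dd.toProd.2 dd.toProd.1]

variable (hd : ∀ (a b : V) (p : G.Walk a b), p.IsPath → d a b = ws w p)

include hd

lemma d_self (a : V) : d a a = 0 := by
  simpa [ws] using hd a a Walk.nil (by simp)

lemma d_eq (htree : G.IsTree) (a b : V) :
    ∃ p : G.Walk a b, p.IsPath ∧ d a b = ws w p := by
  obtain ⟨p, hp, -⟩ := htree.existsUnique_path a b
  exact ⟨p, hp, hd a b p hp⟩

lemma d_symm (hw : ∀ a b, w a b = w b a) (htree : G.IsTree) (a b : V) :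
    d a b = d b a := by
  obtain ⟨p, hp, he⟩ := d_eq w d hd htree a b
  rw [he, ← ws_reverse w hw, ← hd b a p.reverse hp.reverse]

lemma d_pos (hpos : ∀ a b, G.Adj a b → 0 < w a b) (htree : G.IsTree)
    {a b : V} (hab : a ≠ b) : 0 < d a b := by
  obtain ⟨p, hp, he⟩ := d_eq w d hd htree a b
  rw [he, ws]
  apply List.sum_pos
  · intro x hx
    obtain ⟨dd, _, rfl⟩ := List.mem_map.mp hx
    exact one_div_pos.mpr (hpos _ _ dd.adj)
  · intro hcon
    apply hab
    have := p.darts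
    cases p with
    | nil => rfl
    | cons h q => simp [Walk.darts_cons] at hcon


omit hd

lemma exists_adj {x : V} (hx : G.degree x = 1) : ∃ u, G.Adj x u :=
  (SimpleGraph.degree_pos_iff_exists_adj (G := G) (v := x)).mp (by omega)

/-- a leaf does not lie in the interior of any path avoiding it -/
lemma leaf_not_mem_support (htree : G.IsTree) {x : V} (hx : G.degree x = 1)
    {a b : V} (q : G.Walk a b) (hq : q.IsPath) (hxa : x ≠ a) (hxb : x ≠ b) :
    x ∉ q.support := by
  intro hmem
  obtain ⟨ux, hux⟩ := exists_adj hx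
  have htk : (q.takeUntil x hmem).IsPath := hq.takeUntil hmem
  have hdr : (q.dropUntil x hmem).IsPath := hq.dropUntil hmem
  -- second vertex of the drop part is ux
  have hdrnil : ¬ (q.dropUntil x hmem).Nil := Walk.not_nil_of_ne hxb
  obtain ⟨s, hadj, r, hdr_eq⟩ := Walk.not_nil_iff.mp hdrnil
  have hs : s = ux := unique_nbr hx hux hadj
  have h1 : ux ∈ (q.dropUntil x hmem).support.tail := by
    rw [hdr_eq]
    simp only [Walk.support_cons, List.tail_cons]
    exact hs ▸ r.start_mem_support
  have htknil : ¬ (q.takeUntil x hmem).reverse.Nil := Walk.not_nil_of_ne hxa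
  obtain ⟨s', hadj', r', heq'⟩ := Walk.not_nil_iff.mp htknil
  have hs' : s' = ux := unique_nbr hx hux hadj'
  have h2 : ux ∈ (q.takeUntil x hmem).support := by
    have : ux ∈ (q.takeUntil x hmem).reverse.support := by
      rw [heq']
      simp only [Walk.support_cons]
      exact List.mem_cons_of_mem _ (hs' ▸ r'.start_mem_support)
    rwa [Walk.support_reverse, List.mem_reverse] at this
  have hnd := hq.support_nodup
  rw [← Walk.take_spec q hmem, Walk.support_append] at hnd
  exact (List.disjoint_of_nodup_append hnd) h2 h1

include hd

lemma d_leaf (htree : G.IsTree) {x ux y : V} (hx : G.degree x = 1) (hux : G.Adj x ux)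
    (hxy : x ≠ y) : d x y = 1 / w x ux + d ux y := by
  obtain ⟨q, hq, -⟩ := htree.existsUnique_path ux y
  have hxq : x ∉ q.support := leaf_not_mem_support htree hx q hq hux.ne hxy
  have hp : (Walk.cons hux q).IsPath := hq.cons hxq
  rw [hd _ _ _ hp, hd _ _ q hq, ws_cons]

omit hd

lemma adj_leaves_all (htree : G.IsTree) {x y : V} (hx : G.degree x = 1)
    (hy : G.degree y = 1) (hadj : G.Adj x y) (z : V) : z = x ∨ z = y := by
  obtain ⟨p, hp, -⟩ := htree.existsUnique_path x z
  cases p with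
  | nil => exact Or.inl rfl
  | @cons _ m _ h q =>
    have h2 : m = y := unique_nbr hx hadj h
    subst h2
    cases q with
    | nil => exact Or.inr rfl
    | @cons _ m' _ h' r =>
      have h3 : m' = x := unique_nbr hy hadj.symm h'
      subst h3
      exfalso
      have hnd := hp.support_nodup
      simp only [Walk.support_cons, List.nodup_cons] at hnd
      exact hnd.1 (List.mem_cons_of_mem _ r.start_mem_support)

lemma nbr_in_path_unique (htree : G.IsTree) {x u : V} (p : G.Walk x u) (hp : p.IsPath)
    {t₁ t₂ : V} (h1 : G.Adj x t₁) (h2 : G.Adj x t₂)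
    (m1 : t₁ ∈ p.support) (m2 : t₂ ∈ p.support) : t₁ = t₂ := by
  have key : ∀ t (h : G.Adj x t) (m : t ∈ p.support), p.support.tail.head? = some t := by
    intro t h m
    have htk : (p.takeUntil t m).IsPath := hp.takeUntil m
    have hedge : (Walk.cons h (Walk.nil)).IsPath := by simp [h.ne]
    have huniq := (htree.existsUnique_path x t).unique htk hedge
    have hspec := Walk.take_spec p m
    rw [huniq] at hspec
    rw [← hspec]
    simp only [Walk.support_append, Walk.support_cons, Walk.support_nil,
      List.cons_append, List.tail_cons, List.singleton_append]
    rw [Walk.support_eq_cons]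
    rfl
  exact Option.some.inj ((key t₁ h1 m1).symm.trans (key t₂ h2 m2))

lemma branch_to_leaf (htree : G.IsTree)
    (hdeg2 : ∀ u : V, G.degree u ≠ 1 → 2 ≤ G.degree u)
    {u z : V} (h : G.Adj u z) :
    ∃ (x : V) (r : G.Walk z x), (Walk.cons h r).IsPath ∧ G.degree x = 1 := by
  suffices H : ∀ n (x : V) (r : G.Walk z x), (Walk.cons h r).IsPath →
      Fintype.card V ≤ n + (r.length + 1) →
      ∃ (x' : V) (r' : G.Walk z x'), (Walk.cons h r').IsPath ∧ G.degree x' = 1 by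
    refine H (Fintype.card V) z Walk.nil (by simp [h.ne]) (by simp)
  intro n
  induction n with
  | zero =>
    intro x r hr hcard
    have := hr.length_lt
    simp only [Walk.length_cons] at this
    omega
  | succ n ih =>
    intro x r hr hcard
    by_cases hx : G.degree x = 1
    · exact ⟨x, r, hr, hx⟩
    · have hdx : 2 ≤ G.degree x := hdeg2 x hx
      have hex : ∃ t ∈ G.neighborFinset x, t ∉ (Walk.cons h r).support := by
        by_contra hcon
        push_neg at hcon
        have hone : (G.neighborFinset x).card ≤ 1 := by
          refine Finset.card_le_one.mpr fun a ha b hb => ?_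
          refine nbr_in_path_unique htree (Walk.cons h r).reverse hr.reverse
            (by simpa using ha) (by simpa using hb) ?_ ?_ <;>
            rw [Walk.support_reverse, List.mem_reverse] <;> [exact hcon a ha; exact hcon b hb]
        rw [G.card_neighborFinset_eq_degree] at hone
        omega
      obtain ⟨t, ht, htns⟩ := hex
      have hadj : G.Adj x t := by simpa using ht
      have hpath : (Walk.cons h (r.concat hadj)).IsPath := by
        have hcc : Walk.cons h (r.concat hadj) = (Walk.cons h r).concat hadj :=
          (Walk.concat_cons h r hadj).symm
        rw [hcc, Walk.isPath_def, Walk.support_concat]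
        exact hr.support_nodup.append (List.nodup_singleton t)
          (List.disjoint_singleton.mpr htns)
      refine ih t (r.concat hadj) hpath ?_
      rw [Walk.length_concat]
      omega

/-- second vertices agree for two paths out of `a` through a common vertex `y ≠ a` -/
lemma sv_unique (htree : G.IsTree) {a y : V} (hay : a ≠ y) {b c : V}
    (p : G.Walk a b) (q : G.Walk a c) (hp : p.IsPath) (hq : q.IsPath)
    (hyp : y ∈ p.support) (hyq : y ∈ q.support) :
    p.support.tail.head? = q.support.tail.head? := by
  have huniq := (htree.existsUnique_path a y).unique (hp.takeUntil hyp) (hq.takeUntil hyq)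
  have key : ∀ {b : V} (p : G.Walk a b) (hyp : y ∈ p.support),
      p.support.tail.head? = (p.takeUntil y hyp).support.tail.head? := by
    intro b p hyp
    have hnn : ¬ (p.takeUntil y hyp).Nil := Walk.not_nil_of_ne hay
    have hne : (p.takeUntil y hyp).support.tail ≠ [] := by
      intro hcon
      have h1 : (p.takeUntil y hyp).support.length = 1 := by
        conv_lhs => rw [Walk.support_eq_cons]
        simp [hcon]
      rw [Walk.length_support] at h1
      exact hnn (Walk.nil_iff_length_eq.mpr (by omega))
    conv_lhs => rw [← Walk.take_spec p hyp]
    rw [Walk.support_append, List.tail_append_of_ne_nil (Walk.support_ne_nil _),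
      List.head?_append_of_ne_nil _ hne]
  rw [key p hyp, key q hyq, huniq]


omit hd

lemma sv_cons {a b c : V} (h : G.Adj a b) (r : G.Walk b c) :
    (Walk.cons h r).support.tail.head? = some b := by
  rw [Walk.support_cons, List.tail_cons, Walk.support_eq_cons]
  rfl

include hd

lemma side (htree : G.IsTree) (hw : ∀ a b, w a b = w b a)
    (hdeg2 : ∀ u : V, G.degree u ≠ 1 → 2 ≤ G.degree u)
    {a b ua ub : V} (ha : G.degree a = 1) (hb : G.degree b = 1)
    (haa : G.Adj a ua) (hbb : G.Adj b ub)
    (h3 : 3 ≤ G.degree ua) (hab : ua ≠ ub) :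
    ∃ x : V, G.degree x = 1 ∧ x ≠ a ∧ x ≠ b ∧
      d a x - d b x = 1 / w a ua - 1 / w b ub - d ub ua := by
  obtain ⟨q, hqp, -⟩ := htree.existsUnique_path ua ub
  obtain ⟨t, hadjt, q', hq_eq⟩ := Walk.not_nil_iff.mp (Walk.not_nil_of_ne (p := q) hab)
  -- basic inequalities
  have hbua : b ≠ ua := fun hcon => by rw [hcon] at hb; omega
  have haub : a ≠ ub := by
    intro hcon
    subst hcon
    have := adj_leaves_all htree hb ha hbb ua
    rcases this with h | h
    · rw [h] at h3; omega
    · exact (haa.ne h.symm).elim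
  have hta : t ≠ a := by
    intro hcon
    have hno : a ∉ q.support := leaf_not_mem_support htree ha q hqp (G.ne_of_adj haa) haub
    apply hno
    rw [hq_eq, Walk.support_cons]
    exact List.mem_cons_of_mem _ (hcon ▸ q'.start_mem_support)
  -- pick a third neighbor z of ua
  have hzex : ∃ z, G.Adj ua z ∧ z ≠ a ∧ z ≠ t := by
    have hcard : 0 < ((G.neighborFinset ua) \ {a, t}).card := by
      have h1 := Finset.le_card_sdiff ({a, t} : Finset V) (G.neighborFinset ua)
      have h2 : ({a, t} : Finset V).card ≤ 2 := Finset.card_insert_le _ _ |>.trans (by simp)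
      rw [G.card_neighborFinset_eq_degree] at h1
      omega
    obtain ⟨z, hz⟩ := Finset.card_pos.mp hcard
    rw [Finset.mem_sdiff, Finset.mem_insert, Finset.mem_singleton] at hz
    push_neg at hz
    exact ⟨z, by simpa using hz.1, hz.2.1, hz.2.2⟩
  obtain ⟨z, hzadj, hza, hzt⟩ := hzex
  obtain ⟨x, r, hxr, hx⟩ := branch_to_leaf htree hdeg2 hzadj
  set p : G.Walk ua x := Walk.cons hzadj r with hpdef
  -- x ≠ a
  have hxa : x ≠ a := by
    intro hcon
    have hedge : (Walk.cons haa Walk.nil).IsPath := by simp [haa.ne]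
    have hcp : ((p.reverse).copy hcon rfl).IsPath :=
      (Walk.isPath_copy _ hcon rfl).mpr hxr.reverse
    have huniq := (htree.existsUnique_path a ua).unique hcp hedge
    have hlen := congrArg Walk.length huniq
    simp only [Walk.length_copy, Walk.length_reverse, Walk.length_cons, Walk.length_nil,
      hpdef] at hlen
    have : r.Nil := Walk.nil_iff_length_eq.mpr (by omega)
    exact hza (this.eq.trans hcon)
  -- x ≠ b
  have hxb : x ≠ b := by
    intro hcon
    have hbq : b ∉ q.support := leaf_not_mem_support htree hb q hqp hbua hbb.ne
    have hcq : (q.concat hbb.symm).IsPath := by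
      rw [Walk.isPath_def, Walk.support_concat]
      exact hqp.support_nodup.append (List.nodup_singleton b)
        (List.disjoint_singleton.mpr hbq)
    have hcp : (p.copy rfl hcon).IsPath := (Walk.isPath_copy _ rfl hcon).mpr hxr
    have huniq := (htree.existsUnique_path ua b).unique hcp hcq
    have hL : (p.copy rfl hcon).support.tail.head? = some z := by
      rw [Walk.support_copy, hpdef, sv_cons]
    have hR : (q.concat hbb.symm).support.tail.head? = some t := by
      rw [hq_eq, Walk.concat_cons, sv_cons]
    have := hL.symm.trans
      ((congrArg (fun (wk : G.Walk ua b) => wk.support.tail.head?) huniq).trans hR)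
    exact hzt (Option.some.inj this)
  -- the appended walk from ub to x is a path
  have hdisj : ∀ y, y ∈ q.reverse.support → y ∈ p.support.tail → False := by
    intro y hy1 hy2
    have hyq : y ∈ q.support := by rwa [Walk.support_reverse, List.mem_reverse] at hy1
    have hyua : ua ≠ y := by
      intro hcon
      subst hcon
      have := hxr.support_nodup
      rw [Walk.support_eq_cons] at this
      exact (List.nodup_cons.mp this).1 hy2
    have hyp : y ∈ p.support := List.mem_of_mem_tail hy2
    have hsv := sv_unique htree hyua q p hqp hxr hyq hyp
    have hLq : q.support.tail.head? = some t := by rw [hq_eq, sv_cons]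
    have hLp : p.support.tail.head? = some z := by rw [hpdef, sv_cons]
    exact hzt (Option.some.inj (hLp.symm.trans (hsv.symm.trans hLq)))
  have hP : (q.reverse.append p).IsPath := by
    rw [Walk.isPath_def, Walk.support_append]
    refine hqp.reverse.support_nodup.append ?_ ?_
    · exact (Walk.support_eq_cons p ▸ hxr.support_nodup).of_cons
    · exact hdisj
  -- distance computations
  have e3 : d ub x = d ub ua + d ua x := by
    rw [hd _ _ _ hP, ws_append, ← hd _ _ _ hqp.reverse, ← hd _ _ _ hxr]
  have e1 : d a x = 1 / w a ua + d ua x :=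
    d_leaf w d hd htree ha haa (Ne.symm hxa)
  have e2 : d b x = 1 / w b ub + d ub x :=
    d_leaf w d hd htree hb hbb (Ne.symm hxb)
  exact ⟨x, hx, hxa, hxb, by rw [e1, e2, e3]; ring⟩

end LeafAux


open LeafAux

/-- in a finite weighted tree with at least three leaves, in which every
non-leaf vertex has degree at least three, two (distinct) leaves `v i₁` and `v i₂` have a
common neighbor if and only if there is a constant `c` such that
`d(v i₁, v j) - d(v i₂, v j) = c` for every other leaf index `j`.  Here `d` is the
weighted distance, characterized by summing `1/w_e` along (unique) paths. -/
theorem leaves_common_neighbor_iff_distance_difference_constant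
    {V : Type*} [Fintype V] [DecidableEq V]
    (G : SimpleGraph V) [DecidableRel G.Adj] (htree : G.IsTree)
    (w : V → V → ℝ) (hw : ∀ a b, w a b = w b a)
    (hpos : ∀ a b, G.Adj a b → 0 < w a b)
    (k : ℕ) (hk : 3 ≤ k) (v : Fin k → V) (hinj : Function.Injective v)
    (hrange : Set.range v = {u : V | G.degree u = 1})
    (hdeg : ∀ u : V, G.degree u ≠ 1 → 3 ≤ G.degree u)
    (d : V → V → ℝ)
    (hd : ∀ (a b : V) (p : G.Walk a b), p.IsPath →
      d a b = (p.darts.map fun dd => 1 / w dd.toProd.1 dd.toProd.2).sum)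
    (i₁ i₂ : Fin k) (hne : i₁ ≠ i₂) :
    (∃ c : V, G.Adj (v i₁) c ∧ G.Adj (v i₂) c) ↔
      (∃ c : ℝ, ∀ j : Fin k, j ≠ i₁ → j ≠ i₂ →
        d (v i₁) (v j) - d (v i₂) (v j) = c) := by
  have hd' : ∀ (a b : V) (p : G.Walk a b), p.IsPath → d a b = ws w p := hd
  have hleaf : ∀ i, G.degree (v i) = 1 := by
    intro i
    have : v i ∈ Set.range v := ⟨i, rfl⟩
    rwa [hrange] at this
  have hdeg2 : ∀ u : V, G.degree u ≠ 1 → 2 ≤ G.degree u := fun u hu => by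
    have := hdeg u hu; omega
  constructor
  · rintro ⟨u, h1, h2⟩
    refine ⟨1 / w (v i₁) u - 1 / w (v i₂) u, fun j hj1 hj2 => ?_⟩
    have e1 : d (v i₁) (v j) = 1 / w (v i₁) u + d u (v j) :=
      d_leaf w d hd' htree (hleaf i₁) h1 (fun h => hj1 (hinj h).symm)
    have e2 : d (v i₂) (v j) = 1 / w (v i₂) u + d u (v j) :=
      d_leaf w d hd' htree (hleaf i₂) h2 (fun h => hj2 (hinj h).symm)
    rw [e1, e2]; ring
  · rintro ⟨c, hc⟩
    obtain ⟨u₁, hu₁⟩ := exists_adj (G := G) (hleaf i₁)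
    obtain ⟨u₂, hu₂⟩ := exists_adj (G := G) (hleaf i₂)
    refine ⟨u₁, hu₁, ?_⟩
    suffices hsuf : u₁ = u₂ by rw [hsuf]; exact hu₂
    by_contra huu
    -- a third leaf index
    obtain ⟨j₀, hj₀⟩ : ∃ j₀ : Fin k, j₀ ∉ ({i₁, i₂} : Finset (Fin k)) := by
      by_contra hcon
      push_neg at hcon
      have h1 : (Finset.univ : Finset (Fin k)).card ≤ ({i₁, i₂} : Finset (Fin k)).card :=
        Finset.card_le_card (fun x _ => hcon x)
      have h2 : ({i₁, i₂} : Finset (Fin k)).card ≤ 2 :=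
        (Finset.card_insert_le _ _).trans (by simp)
      simp only [Finset.card_univ, Fintype.card_fin] at h1
      omega
    rw [Finset.mem_insert, Finset.mem_singleton] at hj₀
    push_neg at hj₀
    -- the neighbors of the two given leaves have degree ≥ 3
    have hbig : ∀ (i : Fin k) (u : V), G.Adj (v i) u → 3 ≤ G.degree u := by
      intro i u hu
      by_cases h : G.degree u = 1
      · exfalso
        have hall := adj_leaves_all htree (hleaf i) h hu
        rcases hall (v i₁) with h1 | h1 <;> rcases hall (v i₂) with h2 | h2 <;>
          rcases hall (v j₀) with h3 | h3 <;>
          first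
          | exact hne (hinj (h1.trans h2.symm))
          | exact hj₀.1 (hinj (h3.trans h1.symm))
          | exact hj₀.2 (hinj (h3.trans h2.symm))
      · exact hdeg u h
    have h3u₁ : 3 ≤ G.degree u₁ := hbig i₁ u₁ hu₁
    have h3u₂ : 3 ≤ G.degree u₂ := hbig i₂ u₂ hu₂
    obtain ⟨x₁, hx₁, hx₁a, hx₁b, he₁⟩ :=
      side w d hd' htree hw hdeg2 (hleaf i₁) (hleaf i₂) hu₁ hu₂ h3u₁ huu
    obtain ⟨x₂, hx₂, hx₂a, hx₂b, he₂⟩ :=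
      side w d hd' htree hw hdeg2 (hleaf i₂) (hleaf i₁) hu₂ hu₁ h3u₂ (Ne.symm huu)
    -- identify the leaves as images of v
    have hgetj : ∀ x : V, G.degree x = 1 → x ≠ v i₁ → x ≠ v i₂ →
        ∃ j : Fin k, j ≠ i₁ ∧ j ≠ i₂ ∧ v j = x := by
      intro x hx hxa hxb
      have : x ∈ Set.range v := by rw [hrange]; exact hx
      obtain ⟨j, rfl⟩ := this
      exact ⟨j, fun h => hxa (congrArg v h), fun h => hxb (congrArg v h), rfl⟩
    obtain ⟨j₁, hj₁a, hj₁b, hj₁e⟩ := hgetj x₁ hx₁ hx₁a hx₁b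
    obtain ⟨j₂, hj₂a, hj₂b, hj₂e⟩ := hgetj x₂ hx₂ hx₂b hx₂a
    have hc₁ := hc j₁ hj₁a hj₁b
    have hc₂ := hc j₂ hj₂a hj₂b
    rw [hj₁e] at hc₁
    rw [hj₂e] at hc₂
    have hsym : d u₂ u₁ = d u₁ u₂ := d_symm w d hd' hw htree u₂ u₁
    have hpos' : 0 < d u₁ u₂ := d_pos w d hd' hpos htree huu
    rw [he₁] at hc₁
    have hc₂' : d (v i₁) x₂ - d (v i₂) x₂ = -(1 / w (v i₂) u₂ - 1 / w (v i₁) u₁ - d u₁ u₂) := by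
      rw [← he₂]; ring
    rw [hc₂'] at hc₂
    rw [hsym] at hc₁
    rw [← hc₂] at hc₁
    -- hc₁ : A - B - L = -(B - A - L)
    have : d u₁ u₂ = 0 := by linarith
    linarith
end

section
/- Let G₁ and G₂ be finite weighted trees, each having at least two vertices and no vertices of degree two, with leaf enumerations v_1^1, …, v_k^1 and v_1^2, …, v_k^2 of the same length k. If d_{G₁}(v_i^1, v_m^1) = d_{G₂}(v_i^2, v_m^2) for all i, m = 1, …, k, then there exists a graph isomorphism φ from G₁ onto G₂ with φ(v_i^1) = v_i^2 for all i = 1, …, k which maps every edge of G₁ to an edge of G₂ of the same weight. -/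
set_option linter.unusedSectionVars false

open Finset

namespace TreeIsoAux

open SimpleGraph Walk

variable {V : Type*} [DecidableEq V] {G : SimpleGraph V}

/-- weight-sum of a walk -/
noncomputable def wsum (w : V → V → ℝ) {a b : V} (p : G.Walk a b) : ℝ :=
  (p.darts.map fun dd => 1 / w dd.toProd.1 dd.toProd.2).sum

@[simp] lemma wsum_nil (w : V → V → ℝ) {a : V} : wsum w (Walk.nil : G.Walk a a) = 0 := rfl

@[simp] lemma wsum_cons (w : V → V → ℝ) {a b c : V} (h : G.Adj a b) (p : G.Walk b c) :
    wsum w (Walk.cons h p) = 1 / w a b + wsum w p := by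
  simp [wsum]

lemma wsum_append (w : V → V → ℝ) {a b c : V} (p : G.Walk a b) (q : G.Walk b c) :
    wsum w (p.append q) = wsum w p + wsum w q := by
  simp [wsum, Walk.darts_append]

/-- betweenness wrt a distance function -/
def Btw (d : V → V → ℝ) (a m b : V) : Prop := d a m + d m b = d a b

/-- the collection of hypotheses about a weighted tree -/
structure Setup (G : SimpleGraph V) (w : V → V → ℝ) (d : V → V → ℝ) : Prop where
  tree : G.IsTree
  wsymm : ∀ a b, w a b = w b a
  wpos : ∀ a b, G.Adj a b → 0 < w a b
  dist : ∀ (a b : V) (p : G.Walk a b), p.IsPath → d a b = wsum w p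

namespace Setup

variable {w d : V → V → ℝ}

lemma path_unique (hS : Setup G w d) {a b : V} {p q : G.Walk a b}
    (hp : p.IsPath) (hq : q.IsPath) : p = q := by
  have := (SimpleGraph.isAcyclic_iff_path_unique.mp hS.tree.IsAcyclic) ⟨p, hp⟩ ⟨q, hq⟩
  exact congrArg Subtype.val this

lemma exists_path (hS : Setup G w d) (a b : V) : ∃ p : G.Walk a b, p.IsPath :=
  ⟨(hS.tree.isConnected.preconnected a b).some.bypass, Walk.bypass_isPath _⟩

lemma d_self (hS : Setup G w d) (a : V) : d a a = 0 := by
  simpa using hS.dist a a Walk.nil (Walk.IsPath.nil)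

lemma wsum_term_pos (hS : Setup G w d) (dd : G.Dart) :
    0 < 1 / w dd.toProd.1 dd.toProd.2 :=
  one_div_pos.mpr (hS.wpos _ _ dd.adj)

lemma wsum_nonneg (hS : Setup G w d) {a b : V} (p : G.Walk a b) : 0 ≤ wsum w p := by
  apply List.sum_nonneg
  intro x hx
  obtain ⟨dd, _, rfl⟩ := List.mem_map.mp hx
  exact (hS.wsum_term_pos dd).le

lemma d_nonneg (hS : Setup G w d) (a b : V) : 0 ≤ d a b := by
  obtain ⟨p, hp⟩ := hS.exists_path a b
  rw [hS.dist a b p hp]; exact hS.wsum_nonneg p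

lemma wsum_reverse (hS : Setup G w d) {a b : V} (p : G.Walk a b) :
    wsum w p.reverse = wsum w p := by
  simp only [wsum, Walk.darts_reverse, List.map_reverse, List.sum_reverse, List.map_map]
  congr 1
  apply List.map_congr_left
  intro dd _
  simp [Function.comp, Dart.symm, hS.wsymm dd.toProd.1 dd.toProd.2]

lemma d_symm (hS : Setup G w d) (a b : V) : d a b = d b a := by
  obtain ⟨p, hp⟩ := hS.exists_path a b
  rw [hS.dist a b p hp, hS.dist b a p.reverse hp.reverse, hS.wsum_reverse]

lemma d_pos (hS : Setup G w d) {a b : V} (hab : a ≠ b) : 0 < d a b := by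
  obtain ⟨p, hp⟩ := hS.exists_path a b
  rw [hS.dist a b p hp]
  cases p with
  | nil => exact absurd rfl hab
  | cons h q =>
    rw [wsum_cons]
    have := hS.wsum_nonneg q
    have := one_div_pos.mpr (hS.wpos _ _ h)
    linarith

lemma eq_of_d_eq_zero (hS : Setup G w d) {a b : V} (h : d a b = 0) : a = b := by
  by_contra hab
  exact absurd h (ne_of_gt (hS.d_pos hab))

end Setup

end TreeIsoAux

section
open TreeIsoAux SimpleGraph Walk
variable {V : Type*} [DecidableEq V] {G : SimpleGraph V} {w d : V → V → ℝ}

lemma darts_dropUntil_sublist {a b : V} (p : G.Walk a b) {c : V} (h : c ∈ p.support) :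
    (p.dropUntil c h).darts.Sublist p.darts := by
  conv_rhs => rw [← p.take_spec h]
  rw [Walk.darts_append]
  exact List.sublist_append_right _ _

lemma darts_bypass_sublist {a b : V} (p : G.Walk a b) : p.bypass.darts.Sublist p.darts := by
  induction p with
  | nil => simp [Walk.bypass]
  | cons h q ih =>
    simp only [Walk.bypass]
    split_ifs with hs
    · exact ((darts_dropUntil_sublist _ hs).trans ih).trans (List.sublist_cons_self _ _)
    · rw [Walk.darts_cons, Walk.darts_cons]
      exact List.Sublist.cons₂ _ ih

namespace TreeIsoAux

lemma list_sublist_eq_of_sum_le {l L : List ℝ} (h : l.Sublist L)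
    (hpos : ∀ x ∈ L, 0 < x) (hs : L.sum ≤ l.sum) : l = L := by
  induction h with
  | slnil => rfl
  | @cons l L x h ih =>
    exfalso
    have h1 : l.sum ≤ L.sum := List.Sublist.sum_le_sum h (fun a ha => (hpos a (by simp [ha])).le)
    have h2 : 0 < x := hpos x (by simp)
    rw [List.sum_cons] at hs
    linarith
  | @cons_cons l L x h ih =>
    have : l = L := by
      apply ih (fun a ha => hpos a (by simp [ha]))
      rw [List.sum_cons, List.sum_cons] at hs
      linarith
    rw [this]

namespace Setup

lemma d_le_wsum (hS : Setup G w d) {a b : V} (q : G.Walk a b) : d a b ≤ wsum w q := by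
  rw [hS.dist a b q.bypass q.bypass_isPath]
  apply List.Sublist.sum_le_sum (List.Sublist.map _ (darts_bypass_sublist q))
  intro x hx
  obtain ⟨dd, _, rfl⟩ := List.mem_map.mp hx
  exact (hS.wsum_term_pos dd).le

lemma d_triangle (hS : Setup G w d) (a c b : V) : d a b ≤ d a c + d c b := by
  obtain ⟨p, hp⟩ := hS.exists_path a c
  obtain ⟨q, hq⟩ := hS.exists_path c b
  calc d a b ≤ wsum w (p.append q) := hS.d_le_wsum _
    _ = d a c + d c b := by rw [wsum_append, hS.dist a c p hp, hS.dist c b q hq]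

lemma btw_of_mem_support (hS : Setup G w d) {a b c : V} {p : G.Walk a b} (hp : p.IsPath)
    (hc : c ∈ p.support) : Btw d a c b := by
  have hspec := p.take_spec hc
  have h1 : d a c = wsum w (p.takeUntil c hc) := hS.dist a c _ (hp.takeUntil hc)
  have h2 : d c b = wsum w (p.dropUntil c hc) := hS.dist c b _ (hp.dropUntil hc)
  have h3 : d a b = wsum w p := hS.dist a b p hp
  show d a c + d c b = d a b
  rw [h1, h2, h3]
  conv_rhs => rw [← hspec]
  rw [wsum_append]

lemma mem_support_of_btw (hS : Setup G w d) {a b c : V} (h : Btw d a c b)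
    {p : G.Walk a b} (hp : p.IsPath) : c ∈ p.support := by
  obtain ⟨p1, hp1⟩ := hS.exists_path a c
  obtain ⟨p2, hp2⟩ := hS.exists_path c b
  set q : G.Walk a b := p1.append p2 with hq
  have hwq : wsum w q = d a b := by
    rw [hq, wsum_append, ← hS.dist a c p1 hp1, ← hS.dist c b p2 hp2]; exact h
  have hbp : q.bypass = p := hS.path_unique q.bypass_isPath hp
  have hsum : wsum w q ≤ wsum w q.bypass := by
    rw [hwq, ← hS.dist a b q.bypass q.bypass_isPath]
  have hmapeq : (q.bypass.darts.map fun dd => 1 / w dd.toProd.1 dd.toProd.2)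
      = q.darts.map fun dd => 1 / w dd.toProd.1 dd.toProd.2 := by
    apply list_sublist_eq_of_sum_le (List.Sublist.map _ (darts_bypass_sublist q))
    · intro x hx
      obtain ⟨dd, _, rfl⟩ := List.mem_map.mp hx
      exact hS.wsum_term_pos dd
    · exact hsum
  have hlen : q.bypass.darts.length = q.darts.length := by
    have := congrArg List.length hmapeq
    simpa using this
  have hdeq : q.bypass.darts = q.darts :=
    List.Sublist.eq_of_length (darts_bypass_sublist q) hlen
  have hsupp : q.bypass.support = q.support := by
    rw [← Walk.cons_map_snd_darts q.bypass, ← Walk.cons_map_snd_darts q, hdeq]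
  have hcq : c ∈ q.support := by
    rw [hq, Walk.mem_support_append_iff]; left; exact Walk.end_mem_support _
  rw [← hbp, hsupp]
  exact hcq

lemma btw_self_left (hS : Setup G w d) (a b : V) : Btw d a a b := by
  show d a a + d a b = d a b
  rw [hS.d_self]; ring

lemma btw_self_right (hS : Setup G w d) (a b : V) : Btw d a b b := by
  show d a b + d b b = d a b
  rw [hS.d_self]; ring

lemma btw_symm (hS : Setup G w d) {a m b : V} (h : Btw d a m b) : Btw d b m a := by
  have h' : d a m + d m b = d a b := h
  show d b m + d m a = d b a
  have s1 := hS.d_symm a m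
  have s2 := hS.d_symm m b
  have s3 := hS.d_symm a b
  linarith

lemma btw_comp (hS : Setup G w d) {a b x y : V} (hx : Btw d a x b) (hy : Btw d a y b) :
    Btw d a x y ∨ Btw d a y x := by
  obtain ⟨p, hp⟩ := hS.exists_path a b
  have hxm : x ∈ p.support := hS.mem_support_of_btw hx hp
  have hym : y ∈ p.support := hS.mem_support_of_btw hy hp
  have := p.take_spec hxm
  rw [← this, Walk.mem_support_append_iff] at hym
  rcases hym with hym | hym
  · right
    exact hS.btw_of_mem_support (hp.takeUntil hxm) hym
  · left
    have hxyb : Btw d x y b := hS.btw_of_mem_support (hp.dropUntil hxm) hym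
    have h1 : d a x + d x b = d a b := hx
    have h2 : d a y + d y b = d a b := hy
    have h3 : d x y + d y b = d x b := hxyb
    show d a x + d x y = d a y
    linarith

lemma eq_of_btw_of_d_eq (hS : Setup G w d) {a b x y : V} (hx : Btw d a x b) (hy : Btw d a y b)
    (hd : d a x = d a y) : x = y := by
  rcases hS.btw_comp hx hy with h | h
  · have h' : d a x + d x y = d a y := h
    exact hS.eq_of_d_eq_zero (by linarith)
  · have h' : d a y + d y x = d a x := h
    exact (hS.eq_of_d_eq_zero (by linarith)).symm

lemma d_edge (hS : Setup G w d) {a b : V} (h : G.Adj a b) : d a b = 1 / w a b := by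
  have hp : (Walk.cons h Walk.nil : G.Walk a b).IsPath := by
    simp [Walk.cons_isPath_iff, h.ne, h.ne']
  have := hS.dist a b _ hp
  simpa using this

lemma btw_edge (hS : Setup G w d) {a b c : V} (h : G.Adj a b) (hbtw : Btw d a c b) :
    c = a ∨ c = b := by
  have hp : (Walk.cons h Walk.nil : G.Walk a b).IsPath := by
    simp [Walk.cons_isPath_iff, h.ne, h.ne']
  have := hS.mem_support_of_btw hbtw hp
  simpa using this

lemma adj_iff_btw (hS : Setup G w d) (a b : V) :
    G.Adj a b ↔ a ≠ b ∧ ∀ c, Btw d a c b → c = a ∨ c = b := by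
  constructor
  · intro h
    exact ⟨h.ne, fun c hc => hS.btw_edge h hc⟩
  · rintro ⟨hne, hc⟩
    obtain ⟨p, hp⟩ := hS.exists_path a b
    cases p with
    | nil => exact absurd rfl hne
    | @cons _ x _ h q =>
      have hx : x ∈ (Walk.cons h q).support := by simp
      have := hS.btw_of_mem_support hp hx
      rcases hc x this with h1 | h1
      · exact absurd h1 h.ne'
      · rwa [h1] at h

end Setup

end TreeIsoAux
end
section
open TreeIsoAux SimpleGraph Walk
variable {V : Type*} [DecidableEq V] {G : SimpleGraph V} {w d : V → V → ℝ}

namespace TreeIsoAux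

lemma append_isPath {a b c : V} {p : G.Walk a b} {q : G.Walk b c}
    (hp : p.IsPath) (hq : q.IsPath) (hmeet : ∀ x, x ∈ p.support → x ∈ q.support → x = b) :
    (p.append q).IsPath := by
  rw [Walk.isPath_def, Walk.support_append]
  apply List.Nodup.append
  · exact hp.support_nodup
  · have := hq.support_nodup
    rw [q.support_eq_cons] at this
    exact this.of_cons
  · intro x hxp hxq
    have hxq' : x ∈ q.support := by
      rw [q.support_eq_cons]; exact List.mem_cons_of_mem _ hxq
    have hxb : x = b := hmeet x hxp hxq'
    subst hxb
    have := hq.support_nodup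
    rw [q.support_eq_cons] at this
    exact (List.nodup_cons.mp this).1 hxq

namespace Setup

/-- If `m` minimizes distance to `c` on the path from `a` to `b`, then `m` is between
`a` and `c`. -/
lemma btw_of_min (hS : Setup G w d) {a b c m : V} {p : G.Walk a b} (hp : p.IsPath)
    (hm : m ∈ p.support) (hmin : ∀ x ∈ p.support, d m c ≤ d x c) : Btw d a m c := by
  obtain ⟨q, hq⟩ := hS.exists_path m c
  have happ : ((p.takeUntil m hm).append q).IsPath := by
    apply append_isPath (hp.takeUntil hm) hq
    intro x hxp hxq
    by_contra hxm
    have hxps : x ∈ p.support := p.support_takeUntil_subset hm hxp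
    have hbtw : Btw d m x c := hS.btw_of_mem_support hq hxq
    have h1 : d m x + d x c = d m c := hbtw
    have h2 : 0 < d m x := hS.d_pos (fun h => hxm h.symm)
    have := hmin x hxps
    linarith
  have := hS.dist a c _ happ
  rw [wsum_append] at this
  show d a m + d m c = d a c
  rw [← hS.dist a m _ (hp.takeUntil hm), ← hS.dist m c q hq] at this
  linarith

def IsMedian (d : V → V → ℝ) (a b c m : V) : Prop :=
  Btw d a m b ∧ Btw d a m c ∧ Btw d b m c

lemma median_exists (hS : Setup G w d) (a b c : V) : ∃ m, IsMedian d a b c m := by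
  obtain ⟨p, hp⟩ := hS.exists_path a b
  obtain ⟨m, hm, hmin⟩ := Set.exists_min_image {x | x ∈ p.support} (fun x => d x c)
    (p.support.finite_toSet) ⟨a, p.start_mem_support⟩
  refine ⟨m, hS.btw_of_mem_support hp hm, hS.btw_of_min hp hm hmin, ?_⟩
  have hm' : m ∈ p.reverse.support := by rw [Walk.support_reverse]; simpa using hm
  apply hS.btw_of_min hp.reverse hm'
  intro x hx
  apply hmin
  rw [Walk.support_reverse] at hx
  simpa using hx

lemma d_of_isMedian (hS : Setup G w d) {a b c m : V} (h : IsMedian d a b c m) :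
    d a m = (d a b + d a c - d b c) / 2 := by
  obtain ⟨h1, h2, h3⟩ := h
  have e1 : d a m + d m b = d a b := h1
  have e2 : d a m + d m c = d a c := h2
  have e3 : d b m + d m c = d b c := h3
  have s1 := hS.d_symm m b
  linarith

lemma median_cases (hS : Setup G w d) {a b c m : V} (hm : IsMedian d a b c m) (p : V) :
    IsMedian d p b c m ∨ IsMedian d p a c m ∨ IsMedian d p a b m := by
  obtain ⟨hm1, hm2, hm3⟩ := hm
  obtain ⟨t, ht1, ht2, ht3⟩ := hS.median_exists a b p
  obtain ⟨u, hu1, hu2, hu3⟩ := hS.median_exists a c p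
  -- unfolded equations
  have em1 : d a m + d m b = d a b := hm1
  have em2 : d a m + d m c = d a c := hm2
  have em3 : d b m + d m c = d b c := hm3
  have et1 : d a t + d t b = d a b := ht1
  have et2 : d a t + d t p = d a p := ht2
  have et3 : d b t + d t p = d b p := ht3
  have eu1 : d a u + d u c = d a c := hu1
  have eu2 : d a u + d u p = d a p := hu2
  have eu3 : d c u + d u p = d c p := hu3
  -- symmetries used
  have sbt := hS.d_symm b t
  have sbp := hS.d_symm b p
  have spt := hS.d_symm p t
  have scu := hS.d_symm c u
  have scp := hS.d_symm c p
  have spu := hS.d_symm p u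
  have sma := hS.d_symm m a
  have smb := hS.d_symm m b
  have smc := hS.d_symm m c
  have stm := hS.d_symm t m
  have sum' := hS.d_symm u m
  have stu := hS.d_symm t u
  -- triangles
  have T1 : d p m ≤ d p t + d t m := hS.d_triangle p t m
  have T2 : d p b ≤ d p m + d m b := hS.d_triangle p m b
  have T3 : d p a ≤ d p m + d m a := hS.d_triangle p m a
  have T4 : d p c ≤ d p m + d m c := hS.d_triangle p m c
  have T5 : d p m ≤ d p u + d u m := hS.d_triangle p u m
  -- Claims
  have claimAt : Btw d a t m → Btw d p m b := by
    intro h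
    have h4 : d a t + d t m = d a m := h
    show d p m + d m b = d p b
    linarith
  have claimAu : Btw d a u m → Btw d p m c := by
    intro h
    have h4 : d a u + d u m = d a m := h
    show d p m + d m c = d p c
    linarith
  have claimBt : Btw d a m t → Btw d p m a := by
    intro h
    have h4 : d a m + d m t = d a t := h
    have smt := hS.d_symm m t
    have sap := hS.d_symm a p
    show d p m + d m a = d p a
    linarith
  have claimBu : Btw d a m u → Btw d p m a := by
    intro h
    have h4 : d a m + d m u = d a u := h
    have smu := hS.d_symm m u
    have sap := hS.d_symm a p
    show d p m + d m a = d p a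
    linarith
  have compt : Btw d a t m ∨ Btw d a m t := hS.btw_comp ht1 hm1
  have compu : Btw d a u m ∨ Btw d a m u := hS.btw_comp hu1 hm2
  rcases compt with hct | hct
  · rcases compu with hcu | hcu
    · exact Or.inl ⟨claimAt hct, claimAu hcu, hm3⟩
    · exact Or.inr (Or.inr ⟨claimBu hcu, claimAt hct, hm1⟩)
  · rcases compu with hcu | hcu
    · exact Or.inr (Or.inl ⟨claimBt hct, claimAu hcu, hm2⟩)
    · -- both beyond m : show t = m or u = m
      have hpma : Btw d p m a := claimBt hct
      have e4 : d a m + d m t = d a t := hct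
      have e5 : d a m + d m u = d a u := hcu
      have epma : d p m + d m a = d p a := hpma
      have hmtp : Btw d m t p := by
        show d m t + d t p = d m p
        have smt := hS.d_symm m t
        have smp := hS.d_symm m p
        have sap := hS.d_symm a p
        linarith
      have hmup : Btw d m u p := by
        show d m u + d u p = d m p
        have smu := hS.d_symm m u
        have smp := hS.d_symm m p
        have sap := hS.d_symm a p
        linarith
      rcases hS.btw_comp hmtp hmup with hcomp | hcomp
      · -- Btw m t u, show t = m
        have e6 : d m t + d t u = d m u := hcomp
        have Tb : d b c ≤ d b t + d t c := hS.d_triangle b t c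
        have Tc : d t c ≤ d t u + d u c := hS.d_triangle t u c
        have hnn : 0 ≤ d m t := hS.d_nonneg m t
        have htm : m = t := hS.eq_of_d_eq_zero (by linarith)
        subst htm
        exact Or.inr (Or.inr ⟨hpma, hS.btw_symm ht3, hm1⟩)
      · -- Btw m u t, show u = m
        have e6 : d m u + d u t = d m t := hcomp
        have Tb : d c b ≤ d c u + d u b := hS.d_triangle c u b
        have Tc : d u b ≤ d u t + d t b := hS.d_triangle u t b
        have hnn : 0 ≤ d m u := hS.d_nonneg m u
        have sbc := hS.d_symm b c
        have sut := hS.d_symm u t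
        have hum : m = u := hS.eq_of_d_eq_zero (by linarith)
        subst hum
        exact Or.inr (Or.inl ⟨hpma, hS.btw_symm hu3, hm2⟩)

lemma dist_median (hS : Setup G w d) {a b c m : V} (hm : IsMedian d a b c m) (p : V) :
    d p m = max (max ((d p b + d p c - d b c) / 2) ((d p a + d p c - d a c) / 2))
      ((d p a + d p b - d a b) / 2) := by
  obtain ⟨hm1, hm2, hm3⟩ := hm
  have em1 : d a m + d m b = d a b := hm1
  have em2 : d a m + d m c = d a c := hm2
  have em3 : d b m + d m c = d b c := hm3
  have sam := hS.d_symm a m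
  have sbm := hS.d_symm b m
  have scm := hS.d_symm c m
  have T1 : d p a ≤ d p m + d m a := hS.d_triangle p m a
  have T2 : d p b ≤ d p m + d m b := hS.d_triangle p m b
  have T3 : d p c ≤ d p m + d m c := hS.d_triangle p m c
  have sma := hS.d_symm m a
  have smb := hS.d_symm m b
  have smc := hS.d_symm m c
  have h1 : (d p b + d p c - d b c) / 2 ≤ d p m := by linarith
  have h2 : (d p a + d p c - d a c) / 2 ≤ d p m := by linarith
  have h3 : (d p a + d p b - d a b) / 2 ≤ d p m := by linarith
  rcases hS.median_cases ⟨hm1, hm2, hm3⟩ p with h | h | h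
  · have hX := hS.d_of_isMedian h
    apply le_antisymm
    · rw [hX]; exact le_max_of_le_left (le_max_left _ _)
    · exact max_le (max_le h1 h2) h3
  · have hX := hS.d_of_isMedian h
    apply le_antisymm
    · rw [hX]; exact le_max_of_le_left (le_max_right _ _)
    · exact max_le (max_le h1 h2) h3
  · have hX := hS.d_of_isMedian h
    apply le_antisymm
    · rw [hX]; exact le_max_right _ _
    · exact max_le (max_le h1 h2) h3

end Setup
end TreeIsoAux
end
section
open TreeIsoAux SimpleGraph Walk
variable {V : Type*} [Fintype V] [DecidableEq V] {G : SimpleGraph V} [DecidableRel G.Adj]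
  {w d : V → V → ℝ}

namespace TreeIsoAux
namespace Setup

lemma exists_adj (hS : Setup G w d) (hc : 2 ≤ Fintype.card V) (u : V) : ∃ x, G.Adj u x := by
  obtain ⟨v, hv⟩ := Fintype.exists_ne_of_one_lt_card (by omega) u
  obtain ⟨p, hp⟩ := hS.exists_path u v
  cases p with
  | nil => exact absurd rfl hv
  | cons h q => exact ⟨_, h⟩

lemma leaf_beyond (hS : Setup G w d) {u x : V} (h : G.Adj u x) :
    ∃ l, G.degree l = 1 ∧ Btw d u x l := by
  classical
  obtain ⟨l, hl, hmax⟩ := Set.exists_max_image {l | Btw d u x l} (fun l => d u l)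
    (Set.toFinite _) ⟨x, by show d u x + d x x = d u x; rw [hS.d_self]; ring⟩
  have hbtw : Btw d u x l := hl
  have hxl : d u x + d x l = d u l := hbtw
  have hul : u ≠ l := by
    intro he
    have h0 : d u l = 0 := by rw [← he, hS.d_self]
    have h1 : 0 < d u x := hS.d_pos h.ne
    have h2 : 0 ≤ d x l := hS.d_nonneg x l
    linarith
  obtain ⟨p, hp⟩ := hS.exists_path u l
  have hlu : l ≠ u := fun he => hul he.symm
  obtain ⟨z, hadj, q, hrev⟩ := Walk.exists_eq_cons_of_ne hlu p.reverse
  have hzmem : z ∈ p.support := by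
    have : z ∈ p.reverse.support := by rw [hrev]; simp
    rw [Walk.support_reverse] at this
    simpa using this
  have hznel : z ≠ l := hadj.ne'
  -- every neighbor of l equals z
  have hnbr : ∀ y, G.Adj l y → y = z := by
    intro y hy
    by_contra hne
    have hynp : y ∉ p.support := by
      intro hyp
      have hbuy : Btw d u y l := hS.btw_of_mem_support hp hyp
      have hbuz : Btw d u z l := hS.btw_of_mem_support hp hzmem
      have e1 : d u y + d y l = d u l := hbuy
      have e2 : d u z + d z l = d u l := hbuz
      rcases hS.btw_comp hbuy hbuz with hcmp | hcmp
      · have e3 : d u y + d y z = d u z := hcmp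
        have hyzl : Btw d y z l := by show d y z + d z l = d y l; linarith
        rcases hS.btw_edge hy.symm hyzl with h1 | h1
        · exact hne h1.symm
        · exact hznel h1
      · have e3 : d u z + d z y = d u y := hcmp
        have hzyl : Btw d z y l := by show d z y + d y l = d z l; linarith
        rcases hS.btw_edge hadj.symm hzyl with h1 | h1
        · exact hne h1
        · exact absurd h1 hy.ne'
    -- extend the path to y, contradict maximality
    have hpy : (p.append (Walk.cons hy Walk.nil)).IsPath := by
      apply append_isPath hp (by simp [Walk.cons_isPath_iff, hy.ne, hy.ne'])
      intro s hsp hsq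
      simp only [Walk.support_cons, Walk.support_nil, List.mem_cons,
        List.not_mem_nil, or_false, List.mem_singleton] at hsq
      rcases hsq with rfl | rfl
      · rfl
      · exact absurd hsp hynp
    have hxmem : x ∈ p.support := hS.mem_support_of_btw hbtw hp
    have hxmem' : x ∈ (p.append (Walk.cons hy Walk.nil)).support :=
      Walk.subset_support_append_left _ _ hxmem
    have hyS : Btw d u x y := hS.btw_of_mem_support hpy hxmem'
    have hdy : d u y = d u l + 1 / w l y := by
      rw [hS.dist u y _ hpy, wsum_append, ← hS.dist u l p hp]
      simp
    have hwp : 0 < 1 / w l y := one_div_pos.mpr (hS.wpos _ _ hy)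
    have := hmax y hyS
    linarith
  have : G.neighborFinset l = {z} := by
    ext y
    simp only [SimpleGraph.mem_neighborFinset, Finset.mem_singleton]
    exact ⟨fun hy => hnbr y hy, fun hy => hy ▸ hadj⟩
  refine ⟨l, ?_, hbtw⟩
  rw [← SimpleGraph.card_neighborFinset_eq_degree, this, Finset.card_singleton]

lemma btw_leaf_pair (hS : Setup G w d) {u x y lx ly : V} (hx : G.Adj u x) (hy : G.Adj u y)
    (hxy : x ≠ y) (hlx : Btw d u x lx) (hly : Btw d u y ly) : Btw d lx u ly := by
  obtain ⟨m, hm1, hm2, hm3⟩ := hS.median_exists lx ly u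
  -- hm1 : Btw lx m ly, hm2 : Btw lx m u, hm3 : Btw ly m u
  by_cases hmu : m = u
  · rwa [hmu] at hm1
  exfalso
  have humlx : Btw d u m lx := hS.btw_symm hm2
  have humly : Btw d u m ly := hS.btw_symm hm3
  -- derive Btw u x ly
  have hbxly : Btw d u x ly := by
    rcases hS.btw_comp humlx hlx with hcmp | hcmp
    · -- Btw u m x
      rcases hS.btw_edge hx hcmp with h1 | h1
      · exact absurd h1 hmu
      · rwa [← h1]
    · -- Btw u x m
      have e1 : d u x + d x m = d u m := hcmp
      have e2 : d u m + d m ly = d u ly := humly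
      have T1 : d x ly ≤ d x m + d m ly := hS.d_triangle x m ly
      have T2 : d u ly ≤ d u x + d x ly := hS.d_triangle u x ly
      show d u x + d x ly = d u ly
      linarith
  -- now x and y both between u and ly
  rcases hS.btw_comp hbxly hly with hcmp | hcmp
  · rcases hS.btw_edge hy hcmp with h1 | h1
    · exact hx.ne h1.symm
    · exact hxy h1
  · rcases hS.btw_edge hx hcmp with h1 | h1
    · exact hy.ne h1.symm
    · exact hxy h1.symm

lemma vertex_is_median (hS : Setup G w d) (hc : 2 ≤ Fintype.card V)
    (hdeg : ∀ u, G.degree u ≠ 2) (u : V) :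
    ∃ x y z, G.degree x = 1 ∧ G.degree y = 1 ∧ G.degree z = 1 ∧ IsMedian d x y z u := by
  by_cases hu : G.degree u = 1
  · refine ⟨u, u, u, hu, hu, hu, ?_⟩
    have : Btw d u u u := hS.btw_self_left u u
    exact ⟨this, this, this⟩
  · -- degree u ≥ 3
    obtain ⟨x0, hx0⟩ := hS.exists_adj hc u
    have hpos : 0 < G.degree u := by
      rw [SimpleGraph.degree_pos_iff_exists_adj]; exact ⟨x0, hx0⟩
    have h3 : 3 ≤ G.degree u := by
      have := hdeg u
      omega
    rw [← SimpleGraph.card_neighborFinset_eq_degree] at h3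
    obtain ⟨x, hxmem⟩ := Finset.card_pos.mp (show 0 < #(G.neighborFinset u) by omega)
    have h2 : 2 ≤ ((G.neighborFinset u).erase x).card := by
      rw [Finset.card_erase_of_mem hxmem]; omega
    obtain ⟨y, hymem⟩ := Finset.card_pos.mp (by omega : 0 < ((G.neighborFinset u).erase x).card)
    have h1 : 1 ≤ (((G.neighborFinset u).erase x).erase y).card := by
      rw [Finset.card_erase_of_mem hymem]; omega
    obtain ⟨z, hzmem⟩ := Finset.card_pos.mp (by omega : 0 < (((G.neighborFinset u).erase x).erase y).card)
    have hyx : y ≠ x := (Finset.mem_erase.mp hymem).1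
    have hzy : z ≠ y := (Finset.mem_erase.mp hzmem).1
    have hzx : z ≠ x := (Finset.mem_erase.mp ((Finset.mem_erase.mp hzmem).2)).1
    have hax : G.Adj u x := (SimpleGraph.mem_neighborFinset _ _ _).mp hxmem
    have hay : G.Adj u y := (SimpleGraph.mem_neighborFinset _ _ _).mp (Finset.mem_of_mem_erase hymem)
    have haz : G.Adj u z := (SimpleGraph.mem_neighborFinset _ _ _).mp
      (Finset.mem_of_mem_erase (Finset.mem_of_mem_erase hzmem))
    obtain ⟨lx, hlxdeg, hlxb⟩ := hS.leaf_beyond hax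
    obtain ⟨ly, hlydeg, hlyb⟩ := hS.leaf_beyond hay
    obtain ⟨lz, hlzdeg, hlzb⟩ := hS.leaf_beyond haz
    exact ⟨lx, ly, lz, hlxdeg, hlydeg, hlzdeg,
      hS.btw_leaf_pair hax hay hyx.symm hlxb hlyb,
      hS.btw_leaf_pair hax haz hzx.symm hlxb hlzb,
      hS.btw_leaf_pair hay haz hzy.symm hlyb hlzb⟩

lemma eq_of_leaf_dists (hS : Setup G w d) (hc : 2 ≤ Fintype.card V)
    (hdeg : ∀ u, G.degree u ≠ 2) {u u' : V}
    (h : ∀ l, G.degree l = 1 → d u l = d u' l) : u = u' := by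
  obtain ⟨x, y, z, hxd, hyd, hzd, hm⟩ := hS.vertex_is_median hc hdeg u
  have hbx : Btw d x u y := hm.1
  have e1 : d x u + d u y = d x y := hbx
  have hdx : d x u = d x u' := by
    rw [hS.d_symm x u, hS.d_symm x u', h x hxd]
  have hdy : d u y = d u' y := h y hyd
  have hbx' : Btw d x u' y := by
    show d x u' + d u' y = d x y
    rw [← hdx, ← hdy]; exact e1
  exact hS.eq_of_btw_of_d_eq hbx hbx' hdx

end Setup
end TreeIsoAux
end

open TreeIsoAux TreeIsoAux.Setup in
/-- two finite weighted trees with at least two vertices and no vertices of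
degree two whose leaves are enumerated with the same length `k` and which have the same
pairwise distance matrices between leaves are isomorphic via a weight-preserving graph
isomorphism matching the leaf enumerations.  Here the distance functions `d₁, d₂` are
characterized by summing `1/w_e` along (unique) paths. -/
theorem weighted_trees_with_equal_leaf_distances_isomorphic
    {V₁ V₂ : Type*} [Fintype V₁] [DecidableEq V₁] [Fintype V₂] [DecidableEq V₂]
    (G₁ : SimpleGraph V₁) [DecidableRel G₁.Adj] (htree₁ : G₁.IsTree)
    (G₂ : SimpleGraph V₂) [DecidableRel G₂.Adj] (htree₂ : G₂.IsTree)
    (hcard₁ : 2 ≤ Fintype.card V₁) (hcard₂ : 2 ≤ Fintype.card V₂)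
    (hdeg₁ : ∀ u : V₁, G₁.degree u ≠ 2) (hdeg₂ : ∀ u : V₂, G₂.degree u ≠ 2)
    (w₁ : V₁ → V₁ → ℝ) (hw₁ : ∀ a b, w₁ a b = w₁ b a)
    (hpos₁ : ∀ a b, G₁.Adj a b → 0 < w₁ a b)
    (w₂ : V₂ → V₂ → ℝ) (hw₂ : ∀ a b, w₂ a b = w₂ b a)
    (hpos₂ : ∀ a b, G₂.Adj a b → 0 < w₂ a b)
    (k : ℕ)
    (v₁ : Fin k → V₁) (hinj₁ : Function.Injective v₁)
    (hrange₁ : Set.range v₁ = {u : V₁ | G₁.degree u = 1})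
    (v₂ : Fin k → V₂) (hinj₂ : Function.Injective v₂)
    (hrange₂ : Set.range v₂ = {u : V₂ | G₂.degree u = 1})
    (d₁ : V₁ → V₁ → ℝ)
    (hd₁ : ∀ (a b : V₁) (p : G₁.Walk a b), p.IsPath →
      d₁ a b = (p.darts.map fun dd => 1 / w₁ dd.toProd.1 dd.toProd.2).sum)
    (d₂ : V₂ → V₂ → ℝ)
    (hd₂ : ∀ (a b : V₂) (p : G₂.Walk a b), p.IsPath →
      d₂ a b = (p.darts.map fun dd => 1 / w₂ dd.toProd.1 dd.toProd.2).sum)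
    (hdist : ∀ i m : Fin k, d₁ (v₁ i) (v₁ m) = d₂ (v₂ i) (v₂ m)) :
    ∃ φ : G₁ ≃g G₂, (∀ i : Fin k, φ (v₁ i) = v₂ i) ∧
      ∀ a b : V₁, G₁.Adj a b → w₂ (φ a) (φ b) = w₁ a b := by
  have hS₁ : Setup G₁ w₁ d₁ := ⟨htree₁, hw₁, hpos₁, hd₁⟩
  have hS₂ : Setup G₂ w₂ d₂ := ⟨htree₂, hw₂, hpos₂, hd₂⟩
  have hidx₁ : ∀ x : V₁, G₁.degree x = 1 → ∃ i, v₁ i = x := by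
    intro x hx
    have : x ∈ Set.range v₁ := by rw [hrange₁]; exact hx
    exact this
  have hidx₂ : ∀ x : V₂, G₂.degree x = 1 → ∃ i, v₂ i = x := by
    intro x hx
    have : x ∈ Set.range v₂ := by rw [hrange₂]; exact hx
    exact this
  have med1 : ∀ u : V₁, ∃ i j l : Fin k, IsMedian d₁ (v₁ i) (v₁ j) (v₁ l) u := by
    intro u
    obtain ⟨x, y, z, hx, hy, hz, hm⟩ := hS₁.vertex_is_median hcard₁ hdeg₁ u
    obtain ⟨i, rfl⟩ := hidx₁ x hx
    obtain ⟨j, rfl⟩ := hidx₁ y hy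
    obtain ⟨l, rfl⟩ := hidx₁ z hz
    exact ⟨i, j, l, hm⟩
  have med2 : ∀ q : V₂, ∃ i j l : Fin k, IsMedian d₂ (v₂ i) (v₂ j) (v₂ l) q := by
    intro q
    obtain ⟨x, y, z, hx, hy, hz, hm⟩ := hS₂.vertex_is_median hcard₂ hdeg₂ q
    obtain ⟨i, rfl⟩ := hidx₂ x hx
    obtain ⟨j, rfl⟩ := hidx₂ y hy
    obtain ⟨l, rfl⟩ := hidx₂ z hz
    exact ⟨i, j, l, hm⟩
  choose i₁ j₁ l₁ hmed1 using med1
  have hmex : ∀ u : V₁, ∃ m : V₂, IsMedian d₂ (v₂ (i₁ u)) (v₂ (j₁ u)) (v₂ (l₁ u)) m :=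
    fun u => hS₂.median_exists _ _ _
  choose φ hφm using hmex
  -- the leaf-distance vectors of `φ u` and `u` agree
  have key : ∀ (u : V₁) (r : Fin k), d₂ (φ u) (v₂ r) = d₁ u (v₁ r) := by
    intro u r
    have h1 := hS₁.dist_median (hmed1 u) (v₁ r)
    have h2 := hS₂.dist_median (hφm u) (v₂ r)
    rw [hS₁.d_symm u (v₁ r), hS₂.d_symm (φ u) (v₂ r), h1, h2,
      ← hdist r (i₁ u), ← hdist r (j₁ u), ← hdist r (l₁ u),
      ← hdist (i₁ u) (j₁ u), ← hdist (i₁ u) (l₁ u), ← hdist (j₁ u) (l₁ u)]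
  have uniq2 : ∀ q q' : V₂, (∀ r : Fin k, d₂ q (v₂ r) = d₂ q' (v₂ r)) → q = q' := by
    intro q q' h
    apply hS₂.eq_of_leaf_dists hcard₂ hdeg₂
    intro l hl
    obtain ⟨r, rfl⟩ := hidx₂ l hl
    exact h r
  have hinj : Function.Injective φ := by
    intro u u' h
    apply hS₁.eq_of_leaf_dists hcard₁ hdeg₁
    intro l hl
    obtain ⟨r, rfl⟩ := hidx₁ l hl
    rw [← key u r, ← key u' r, h]
  have hsurj : Function.Surjective φ := by
    intro q
    obtain ⟨i, j, l, hq⟩ := med2 q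
    obtain ⟨u, hu⟩ := hS₁.median_exists (v₁ i) (v₁ j) (v₁ l)
    refine ⟨u, ?_⟩
    apply uniq2
    intro r
    rw [key u r]
    have h1 := hS₁.dist_median hu (v₁ r)
    have h2 := hS₂.dist_median hq (v₂ r)
    rw [hS₁.d_symm u (v₁ r), hS₂.d_symm q (v₂ r), h1, h2,
      ← hdist r i, ← hdist r j, ← hdist r l,
      ← hdist i j, ← hdist i l, ← hdist j l]
  have hiso : ∀ u u' : V₁, d₂ (φ u) (φ u') = d₁ u u' := by
    intro u u'
    have h1 := hS₁.dist_median (hmed1 u') u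
    have h2 := hS₂.dist_median (hφm u') (φ u)
    rw [h1, h2, key u (i₁ u'), key u (j₁ u'), key u (l₁ u'),
      ← hdist (i₁ u') (j₁ u'), ← hdist (i₁ u') (l₁ u'), ← hdist (j₁ u') (l₁ u')]
  have hleaf : ∀ i : Fin k, φ (v₁ i) = v₂ i := by
    intro i
    apply uniq2
    intro r
    rw [key (v₁ i) r, hdist i r]
  have hadj : ∀ a b : V₁, G₂.Adj (φ a) (φ b) ↔ G₁.Adj a b := by
    intro a b
    rw [hS₁.adj_iff_btw, hS₂.adj_iff_btw]
    constructor
    · rintro ⟨hne, hbtw⟩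
      refine ⟨fun h => hne (by rw [h]), fun c hc => ?_⟩
      have hc2 : Btw d₂ (φ a) (φ c) (φ b) := by
        show d₂ (φ a) (φ c) + d₂ (φ c) (φ b) = d₂ (φ a) (φ b)
        rw [hiso a c, hiso c b, hiso a b]
        exact hc
      rcases hbtw _ hc2 with h | h
      · exact Or.inl (hinj h)
      · exact Or.inr (hinj h)
    · rintro ⟨hne, hbtw⟩
      refine ⟨fun h => hne (hinj h), fun c2 hc2 => ?_⟩
      obtain ⟨c, rfl⟩ := hsurj c2
      have hc1 : Btw d₁ a c b := by
        show d₁ a c + d₁ c b = d₁ a b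
        rw [← hiso a c, ← hiso c b, ← hiso a b]
        exact hc2
      rcases hbtw c hc1 with h | h
      · exact Or.inl (by rw [h])
      · exact Or.inr (by rw [h])
  refine ⟨⟨Equiv.ofBijective φ ⟨hinj, hsurj⟩, fun {a b} => hadj a b⟩, ?_, ?_⟩
  · intro i
    exact hleaf i
  · intro a b hab
    have hab2 : G₂.Adj (φ a) (φ b) := (hadj a b).mpr hab
    have e1 := hS₁.d_edge hab
    have e2 := hS₂.d_edge hab2
    have h12 : 1 / w₂ (φ a) (φ b) = 1 / w₁ a b := by
      rw [← e1, ← e2, hiso a b]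
    have p1 : 0 < w₁ a b := hpos₁ a b hab
    have p2 : 0 < w₂ (φ a) (φ b) := hpos₂ _ _ hab2
    field_simp at h12
    show w₂ (φ a) (φ b) = w₁ a b
    linarith
end

section
/- Let G be a finite weighted tree whose set of leaves is {v_1, …, v_k} and which has at least one interior vertex. Write the weighted Laplacian in block form L(G) = [[D̂, −Bᵀ],[−B, L̂]] with respect to the partition of the vertices into the leaves v_1, …, v_k and the interior vertices, and let S := D̂ − Bᵀ L̂⁻¹ B be the Schur complement of L(G) onto the leaves (L̂ is invertible since G is connected). Fix i₀ ∈ {1,…,k} and let S_{i₀} be the k×k matrix obtained from S by replacing the (i₀,i₀) entry by 1 and all other entries of the i₀-th row and of the i₀-th column by 0. Then S_{i₀} is invertible and, for every j ≠ i₀, the j-th diagonal entry of S_{i₀}⁻¹ equals d_G(v_j, v_{i₀}), the distance between the leaves v_j and v_{i₀}. -/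
open Finset Matrix

namespace SchurAux
variable {V : Type*} [Fintype V] [DecidableEq V]
  {G : SimpleGraph V} [DecidableRel G.Adj] {w : V → V → ℝ}

lemma lap_symm (hw : ∀ a b, w a b = w b a) (a b : V) :
    weightedLaplacian G w a b = weightedLaplacian G w b a := by
  unfold weightedLaplacian
  simp only [Matrix.of_apply]
  by_cases h : a = b
  · subst h; rfl
  · rw [if_neg h, if_neg (Ne.symm h)]
    by_cases hab : G.Adj a b
    · rw [if_pos hab, if_pos hab.symm, hw]
    · rw [if_neg hab, if_neg (fun h' => hab h'.symm)]

lemma lap_mulVec (f : V → ℝ) (a : V) :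
    (weightedLaplacian G w *ᵥ f) a
      = ∑ b ∈ Finset.univ.filter (G.Adj a ·), w a b * (f a - f b) := by
  have hna : a ∉ Finset.univ.filter (G.Adj a ·) := by simp
  have h1 : (weightedLaplacian G w *ᵥ f) a
      = (∑ c ∈ Finset.univ.filter (G.Adj a ·), w a c) * f a
        + ∑ b ∈ (Finset.univ : Finset V).erase a,
            (if G.Adj a b then - w a b else 0) * f b := by
    rw [Matrix.mulVec, dotProduct, ← Finset.add_sum_erase _ _ (Finset.mem_univ a)]
    unfold weightedLaplacian
    simp only [Matrix.of_apply, if_pos rfl]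
    congr 1
    apply Finset.sum_congr rfl
    intro b hb
    rw [if_neg (Finset.ne_of_mem_erase hb).symm]
  rw [h1]
  have h2 : ∑ b ∈ (Finset.univ : Finset V).erase a,
      (if G.Adj a b then - w a b else 0) * f b
      = ∑ b ∈ Finset.univ.filter (G.Adj a ·), -(w a b * f b) := by
    rw [Finset.sum_erase]
    · rw [Finset.sum_filter]
      apply Finset.sum_congr rfl
      intro b _
      split_ifs <;> ring
    · simp [G.irrefl]
  rw [h2, Finset.sum_mul, ← Finset.sum_add_distrib]
  apply Finset.sum_congr rfl
  intro b _
  ring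

end SchurAux

set_option linter.unusedSectionVars false
namespace SchurAux
variable {V : Type*} [Fintype V] [DecidableEq V]
  {G : SimpleGraph V} [DecidableRel G.Adj] {w : V → V → ℝ} {d : V → V → ℝ}

lemma d_refl (hd : ∀ (a b : V) (p : G.Walk a b), p.IsPath →
      d a b = (p.darts.map fun dd => 1 / w dd.toProd.1 dd.toProd.2).sum) (a : V) :
    d a a = 0 := by
  simpa using hd a a SimpleGraph.Walk.nil SimpleGraph.Walk.IsPath.nil

lemma d_symm (htree : G.IsTree) (hw : ∀ a b, w a b = w b a)
    (hd : ∀ (a b : V) (p : G.Walk a b), p.IsPath →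
      d a b = (p.darts.map fun dd => 1 / w dd.toProd.1 dd.toProd.2).sum) (a b : V) :
    d a b = d b a := by
  obtain ⟨p, hp, -⟩ := htree.existsUnique_path a b
  rw [hd a b p hp, hd b a p.reverse hp.reverse, SimpleGraph.Walk.darts_reverse,
    List.map_reverse, List.sum_reverse, List.map_map]
  congr 1
  apply List.map_congr_left
  intro dd _
  simp only [Function.comp_apply, SimpleGraph.Dart.symm_toProd, Prod.fst_swap, Prod.snd_swap]
  rw [hw]

lemma d_adj (hd : ∀ (a b : V) (p : G.Walk a b), p.IsPath →
      d a b = (p.darts.map fun dd => 1 / w dd.toProd.1 dd.toProd.2).sum)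
    {a b : V} (h : G.Adj a b) : d a b = 1 / w a b := by
  have hp : (SimpleGraph.Walk.cons h SimpleGraph.Walk.nil : G.Walk a b).IsPath := by
    rw [SimpleGraph.Walk.cons_isPath_iff]
    exact ⟨SimpleGraph.Walk.IsPath.nil, by simpa using h.ne⟩
  simpa using hd a b _ hp

lemma d_parent (htree : G.IsTree)
    (hd : ∀ (a b : V) (p : G.Walk a b), p.IsPath →
      d a b = (p.darts.map fun dd => 1 / w dd.toProd.1 dd.toProd.2).sum)
    {a r : V} (hne : a ≠ r) :
    ∃ b, ∃ _ : G.Adj a b, d a r = 1 / w a b + d b r ∧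
      ∀ c, G.Adj a c → c ≠ b → d c r = 1 / w c a + d a r := by
  obtain ⟨p, hp, -⟩ := htree.existsUnique_path a r
  cases p with
  | nil => exact absurd rfl hne
  | @cons _ b _ h q =>
    refine ⟨b, h, ?_, ?_⟩
    · rw [hd a r _ hp, hd b r q hp.of_cons]
      simp [SimpleGraph.Walk.darts_cons]
    · intro c hc hcb
      have hanq : a ∉ q.support := by
        rw [SimpleGraph.Walk.cons_isPath_iff] at hp
        exact hp.2
      have hcp : c ∉ (SimpleGraph.Walk.cons h q).support := by
        intro hmem
        rw [SimpleGraph.Walk.support_cons, List.mem_cons] at hmem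
        rcases hmem with rfl | hmem
        · exact G.irrefl (hc)
        · -- c ∈ q.support; build two paths a → c
          have h1 : (SimpleGraph.Walk.cons hc SimpleGraph.Walk.nil : G.Walk a c).IsPath := by
            rw [SimpleGraph.Walk.cons_isPath_iff]
            exact ⟨SimpleGraph.Walk.IsPath.nil, by simpa using hc.ne⟩
          have h2 : (SimpleGraph.Walk.cons h (q.takeUntil c hmem)).IsPath := by
            rw [SimpleGraph.Walk.cons_isPath_iff]
            refine ⟨hp.of_cons.takeUntil hmem, fun ha => hanq ?_⟩
            exact SimpleGraph.Walk.support_takeUntil_subset q hmem ha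
          have heq := ((htree.existsUnique_path a c).unique h1 h2)
          have := congrArg SimpleGraph.Walk.support heq
          rw [SimpleGraph.Walk.support_cons, SimpleGraph.Walk.support_cons,
            SimpleGraph.Walk.support_nil, (q.takeUntil c hmem).support_eq_cons] at this
          have h3 := congrArg (fun l => l[1]?) this
          simp only [List.getElem?_cons_succ, List.getElem?_cons_zero] at h3
          exact hcb (Option.some_injective _ h3)
      have hcpath : (SimpleGraph.Walk.cons (hc.symm) (SimpleGraph.Walk.cons h q)).IsPath := by
        rw [SimpleGraph.Walk.cons_isPath_iff]
        exact ⟨hp, hcp⟩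
      rw [hd c r _ hcpath, hd a r _ hp]
      simp [SimpleGraph.Walk.darts_cons]

end SchurAux

namespace SchurAux
set_option linter.unusedSectionVars false
variable {V : Type*} [Fintype V] [DecidableEq V]
  {G : SimpleGraph V} [DecidableRel G.Adj] {w : V → V → ℝ} {d : V → V → ℝ}

lemma lap_dist (htree : G.IsTree) (hw : ∀ a b, w a b = w b a)
    (hpos : ∀ a b, G.Adj a b → 0 < w a b)
    (hd : ∀ (a b : V) (p : G.Walk a b), p.IsPath →
      d a b = (p.darts.map fun dd => 1 / w dd.toProd.1 dd.toProd.2).sum)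
    (r a : V) :
    (weightedLaplacian G w *ᵥ fun x => d x r) a
      = if a = r then -(G.degree a : ℝ) else 2 - (G.degree a : ℝ) := by
  rw [lap_mulVec]
  have hdeg : (G.degree a : ℝ) = (Finset.univ.filter (G.Adj a ·)).card := by
    rw [← G.neighborFinset_eq_filter]; rfl
  by_cases ha : a = r
  · subst ha
    rw [if_pos rfl]
    have : ∀ b ∈ Finset.univ.filter (G.Adj a ·), w a b * (d a a - d b a) = -1 := by
      intro b hb
      rw [Finset.mem_filter] at hb
      have hadj := hb.2
      rw [d_refl hd, d_adj hd hadj.symm, hw b a]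
      have h0 := (hpos a b hadj).ne'
      field_simp
      ring
    rw [Finset.sum_congr rfl this, Finset.sum_const, hdeg]
    simp [mul_comm]
  · rw [if_neg ha]
    obtain ⟨b, hab, hdb, hrest⟩ := d_parent htree hd ha
    have hbmem : b ∈ Finset.univ.filter (G.Adj a ·) := by simp [hab]
    rw [← Finset.add_sum_erase _ _ hbmem]
    have hterm : w a b * (d a r - d b r) = 1 := by
      rw [hdb]
      have h0 := (hpos a b hab).ne'
      field_simp
      ring
    have hrestsum : ∀ c ∈ (Finset.univ.filter (G.Adj a ·)).erase b,
        w a c * (d a r - d c r) = -1 := by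
      intro c hc
      have hcb := Finset.ne_of_mem_erase hc
      have hadj : G.Adj a c := (Finset.mem_filter.mp (Finset.mem_of_mem_erase hc)).2
      rw [hrest c hadj hcb, hw a c]
      have := (hpos a c hadj).ne'
      rw [hw a c] at this
      field_simp
      ring
    rw [hterm, Finset.sum_congr rfl hrestsum, Finset.sum_const,
      Finset.card_erase_of_mem hbmem, hdeg]
    have hcpos : 1 ≤ (Finset.univ.filter (G.Adj a ·)).card := Finset.card_pos.mpr ⟨b, hbmem⟩
    rw [nsmul_eq_mul, Nat.cast_sub hcpos]
    push_cast
    ring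

lemma lap_gromov (htree : G.IsTree) (hw : ∀ a b, w a b = w b a)
    (hpos : ∀ a b, G.Adj a b → 0 < w a b)
    (hd : ∀ (a b : V) (p : G.Walk a b), p.IsPath →
      d a b = (p.darts.map fun dd => 1 / w dd.toProd.1 dd.toProd.2).sum)
    {r t : V} (hrt : r ≠ t) (hr : G.degree r = 1) (ht : G.degree t = 1) (a : V) :
    (weightedLaplacian G w *ᵥ fun x => (d x r + d t r - d x t) / 2) a
      = (if a = t then 1 else 0) - (if a = r then 1 else 0) := by
  have key : (weightedLaplacian G w *ᵥ fun x => (d x r + d t r - d x t) / 2) a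
      = ((weightedLaplacian G w *ᵥ fun x => d x r) a
        - (weightedLaplacian G w *ᵥ fun x => d x t) a) / 2 := by
    rw [lap_mulVec, lap_mulVec, lap_mulVec, ← Finset.sum_sub_distrib, Finset.sum_div]
    apply Finset.sum_congr rfl
    intro b _
    ring
  rw [key, lap_dist htree hw hpos hd, lap_dist htree hw hpos hd]
  by_cases har : a = r
  · subst har
    simp only [if_pos rfl, if_neg hrt]
    rw [hr]
    norm_num
  · rw [if_neg har, if_neg har]
    by_cases hat : a = t
    · subst hat
      simp only [if_pos rfl]
      rw [ht]
      norm_num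
    · rw [if_neg hat, if_neg hat]
      ring

end SchurAux

namespace SchurAux
set_option linter.unusedSectionVars false

section Inv
variable {V : Type*} [Fintype V] [DecidableEq V]
  {G : SimpleGraph V} [DecidableRel G.Adj] {w : V → V → ℝ}

/-- value of extension along a walk: harmonic-difference implies constant -/
lemma const_on_walk (f : V → ℝ) (hloc : ∀ a b, G.Adj a b → f a = f b)
    {a b : V} (p : G.Walk a b) : f a = f b := by
  induction p with
  | nil => rfl
  | cons h _ ih => exact (hloc _ _ h).trans ih

lemma lhat_isUnit (htree : G.IsTree) (hw : ∀ a b, w a b = w b a)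
    (hpos : ∀ a b, G.Adj a b → 0 < w a b) (v0 : V) (h0 : G.degree v0 = 1) :
    IsUnit ((weightedLaplacian G w).submatrix
      (fun l : {u : V // G.degree u ≠ 1} => (l : V))
      (fun l : {u : V // G.degree u ≠ 1} => (l : V))) := by
  set Lhat := (weightedLaplacian G w).submatrix
      (fun l : {u : V // G.degree u ≠ 1} => (l : V))
      (fun l : {u : V // G.degree u ≠ 1} => (l : V)) with hL
  rw [← Matrix.mulVec_injective_iff_isUnit]
  have hker : ∀ y, Lhat *ᵥ y = 0 → y = 0 := by
    intro y hy
    set f : V → ℝ := fun a => if h : G.degree a = 1 then 0 else y ⟨a, h⟩ with hf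
    have hfl : ∀ a (h : G.degree a ≠ 1), f a = y ⟨a, h⟩ := by
      intro a h; simp [hf, h]
    have hfle : ∀ a, G.degree a = 1 → f a = 0 := by
      intro a h; simp [hf, h]
    -- the full Laplacian applied to f vanishes on interior vertices
    have hLf : ∀ a (h : G.degree a ≠ 1), (weightedLaplacian G w *ᵥ f) a = 0 := by
      intro a h
      have hrhs : (Lhat *ᵥ y) ⟨a, h⟩
          = ∑ b ∈ Finset.univ.filter (fun b : V => G.degree b ≠ 1),
              weightedLaplacian G w a b * f b := by
        rw [Matrix.mulVec, dotProduct]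
        rw [Finset.sum_subtype (p := fun b : V => G.degree b ≠ 1)
          (Finset.univ.filter (fun b : V => G.degree b ≠ 1))
          (by intro x; simp) (fun b : V => weightedLaplacian G w a b * f b)]
        apply Finset.sum_congr rfl
        intro b _
        rw [hfl (↑b) b.2, Subtype.coe_eta]
        rfl
      have hlhs : (weightedLaplacian G w *ᵥ f) a
          = ∑ b ∈ Finset.univ.filter (fun b : V => G.degree b ≠ 1),
              weightedLaplacian G w a b * f b := by
        rw [Matrix.mulVec, dotProduct]
        symm
        apply Finset.sum_subset (Finset.filter_subset _ _)
        intro b _ hb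
        simp only [Finset.mem_filter, Finset.mem_univ, true_and, not_not] at hb
        rw [hfle b hb, mul_zero]
      rw [hlhs, ← hrhs, hy]
      rfl
    -- quadratic form vanishes
    have hQ : ∑ a, f a * (weightedLaplacian G w *ᵥ f) a = 0 := by
      apply Finset.sum_eq_zero
      intro a _
      by_cases h : G.degree a = 1
      · rw [hfle a h, zero_mul]
      · rw [hLf a h, mul_zero]
    have hQ' : ∑ a, ∑ b, (if G.Adj a b then w a b * (f a * (f a - f b)) else 0) = 0 := by
      have heq : (∑ a, ∑ b, (if G.Adj a b then w a b * (f a * (f a - f b)) else 0))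
          = ∑ a, f a * (weightedLaplacian G w *ᵥ f) a := by
        apply Finset.sum_congr rfl
        intro a _
        rw [lap_mulVec, Finset.mul_sum, Finset.sum_filter]
        apply Finset.sum_congr rfl
        intro b _
        split_ifs <;> ring
      rw [heq, hQ]
    have hQswap : ∑ a, ∑ b, (if G.Adj a b then w a b * (f b * (f b - f a)) else 0) = 0 := by
      rw [Finset.sum_comm]
      have hcg : ∀ b a : V, (if G.Adj a b then w a b * (f b * (f b - f a)) else 0)
          = (if G.Adj b a then w b a * (f b * (f b - f a)) else 0) := by
        intro b a
        by_cases h : G.Adj a b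
        · rw [if_pos h, if_pos h.symm, hw]
        · rw [if_neg h, if_neg (fun h' => h h'.symm)]
      calc ∑ b : V, ∑ a : V, (if G.Adj a b then w a b * (f b * (f b - f a)) else 0)
          = ∑ b : V, ∑ a : V, (if G.Adj b a then w b a * (f b * (f b - f a)) else 0) :=
            Finset.sum_congr rfl fun b _ => Finset.sum_congr rfl fun a _ => hcg b a
        _ = 0 := hQ'
    have hsq : ∑ a, ∑ b, (if G.Adj a b then w a b * (f a - f b) ^ 2 else 0) = 0 := by
      have heq : (∑ a, ∑ b, (if G.Adj a b then w a b * (f a - f b) ^ 2 else 0))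
          = (∑ a, ∑ b, (if G.Adj a b then w a b * (f a * (f a - f b)) else 0))
            + ∑ a, ∑ b, (if G.Adj a b then w a b * (f b * (f b - f a)) else 0) := by
        rw [← Finset.sum_add_distrib]
        apply Finset.sum_congr rfl; intro a _
        rw [← Finset.sum_add_distrib]
        apply Finset.sum_congr rfl; intro b _
        split_ifs <;> ring
      rw [heq, hQ', hQswap, add_zero]
    have hzero : ∀ a b, G.Adj a b → f a = f b := by
      have hnn : ∀ a b : V,
          (0:ℝ) ≤ (if G.Adj a b then w a b * (f a - f b) ^ 2 else 0) := by
        intro a b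
        split_ifs with h
        · exact mul_nonneg (hpos a b h).le (sq_nonneg _)
        · exact le_refl _
      have houter := (Finset.sum_eq_zero_iff_of_nonneg
        (fun a _ => Finset.sum_nonneg fun b _ => hnn a b)).mp hsq
      intro a b hab
      have hinner := (Finset.sum_eq_zero_iff_of_nonneg
        (fun b _ => hnn a b)).mp (houter a (Finset.mem_univ a)) b (Finset.mem_univ b)
      rw [if_pos hab] at hinner
      have h2 : (f a - f b) ^ 2 = 0 := by
        rcases mul_eq_zero.mp hinner with h | h
        · exact absurd h (hpos a b hab).ne'
        · exact h
      have h3 := pow_eq_zero_iff (two_ne_zero) |>.mp h2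
      exact sub_eq_zero.mp h3
    -- f is constant, hence 0
    have hconst : ∀ a, f a = 0 := by
      intro a
      have hr : G.Reachable a v0 := htree.isConnected.preconnected a v0
      obtain ⟨p⟩ := hr
      rw [const_on_walk f hzero p, hfle v0 h0]
    funext s
    rw [← hfl s s.2, hconst]
    rfl
  intro y₁ y₂ hy
  have : Lhat *ᵥ (y₁ - y₂) = 0 := by
    rw [Matrix.mulVec_sub, hy, sub_self]
  have := hker _ this
  exact sub_eq_zero.mp this

end Inv
end SchurAux

/-- let `G` be a finite weighted tree with leaves `v 0, …, v (k-1)` and at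
least one interior vertex, and let `S = D̂ - Bᵀ L̂⁻¹ B` be the Schur complement of the
weighted Laplacian onto the leaves (block form `[[D̂, -Bᵀ], [-B, L̂]]`).  For a fixed
leaf index `i₀`, the matrix `S_{i₀}` obtained from `S` by replacing the `(i₀,i₀)` entry
by `1` and the other entries of the `i₀`-th row and column by `0` is invertible, and for
`j ≠ i₀` the `j`-th diagonal entry of `S_{i₀}⁻¹` is the distance `d (v j) (v i₀)`
between the corresponding leaves.  The distance `d` is characterized by summing `1/w_e`
along (unique) paths. -/
theorem schur_complement_inverse_diagonal_gives_leaf_distances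
    {V : Type*} [Fintype V] [DecidableEq V]
    (G : SimpleGraph V) [DecidableRel G.Adj] (htree : G.IsTree)
    (w : V → V → ℝ) (hw : ∀ a b, w a b = w b a)
    (hpos : ∀ a b, G.Adj a b → 0 < w a b)
    (k : ℕ) (v : Fin k → V) (hinj : Function.Injective v)
    (hrange : Set.range v = {u : V | G.degree u = 1})
    (hint : ∃ u : V, G.degree u ≠ 1)
    (d : V → V → ℝ)
    (hd : ∀ (a b : V) (p : G.Walk a b), p.IsPath →
      d a b = (p.darts.map fun dd => 1 / w dd.toProd.1 dd.toProd.2).sum)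
    (i₀ : Fin k) :
    let Lhat : Matrix {u : V // G.degree u ≠ 1} {u : V // G.degree u ≠ 1} ℝ :=
      (weightedLaplacian G w).submatrix (fun l => (l : V)) (fun l => (l : V));
    let Dhat : Matrix (Fin k) (Fin k) ℝ :=
      Matrix.of fun i j => weightedLaplacian G w (v i) (v j);
    let B : Matrix {u : V // G.degree u ≠ 1} (Fin k) ℝ :=
      Matrix.of fun l i => -(weightedLaplacian G w (l : V) (v i));
    let S : Matrix (Fin k) (Fin k) ℝ := Dhat - Bᵀ * Lhat⁻¹ * B;
    let Si₀ : Matrix (Fin k) (Fin k) ℝ :=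
      Matrix.of fun i j =>
        if i = i₀ then (if j = i₀ then 1 else 0)
        else if j = i₀ then 0 else S i j;
    IsUnit Si₀ ∧ ∀ j : Fin k, j ≠ i₀ → Si₀⁻¹ j j = d (v j) (v i₀) := by
  intro Lhat Dhat B S Si₀
  classical
  have hleaf : ∀ j : Fin k, G.degree (v j) = 1 := by
    intro j
    have hmem : v j ∈ Set.range v := ⟨j, rfl⟩
    rw [hrange] at hmem
    exact hmem
  have hvne : ∀ {l m : Fin k}, l ≠ m → v l ≠ v m := fun h h' => h (hinj h')
  have hLhatUnit : IsUnit Lhat := SchurAux.lhat_isUnit htree hw hpos (v i₀) (hleaf i₀)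
  have hLhatDet : IsUnit Lhat.det := (Matrix.isUnit_iff_isUnit_det _).mp hLhatUnit
  -- splitting sums over V into leaves and interior vertices
  have hsplit : ∀ F : V → ℝ,
      ∑ b, F b = (∑ j, F (v j)) + ∑ s : {u : V // G.degree u ≠ 1}, F (s : V) := by
    intro F
    have hbij : Function.Bijective
        (Sum.elim v Subtype.val : Fin k ⊕ {u : V // G.degree u ≠ 1} → V) := by
      constructor
      · rintro (j | s) (j' | s') h
        · simp only [Sum.elim_inl] at h
          exact congrArg Sum.inl (hinj h)
        · simp only [Sum.elim_inl, Sum.elim_inr] at h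
          exact absurd (hleaf j) (by rw [h]; exact s'.2)
        · simp only [Sum.elim_inl, Sum.elim_inr] at h
          exact absurd (hleaf j') (by rw [← h]; exact s.2)
        · simp only [Sum.elim_inr] at h
          exact congrArg Sum.inr (Subtype.ext h)
      · intro b
        by_cases hb : G.degree b = 1
        · have : b ∈ Set.range v := by rw [hrange]; exact hb
          obtain ⟨j, hj⟩ := this
          exact ⟨Sum.inl j, hj⟩
        · exact ⟨Sum.inr ⟨b, hb⟩, rfl⟩
    rw [← Equiv.sum_comp (Equiv.ofBijective _ hbij) F, Fintype.sum_sum_type]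
    rfl
  -- the Gromov-product potential functions
  set U : Fin k → V → ℝ :=
    fun l x => (d x (v i₀) + d (v l) (v i₀) - d x (v l)) / 2 with hU
  have hLu : ∀ (l : Fin k), l ≠ i₀ → ∀ a : V,
      (weightedLaplacian G w *ᵥ U l) a
        = (if a = v l then 1 else 0) - (if a = v i₀ then 1 else 0) :=
    fun l hl a =>
      SchurAux.lap_gromov htree hw hpos hd (hvne (Ne.symm hl)) (hleaf i₀) (hleaf l) a
  have hU_i₀ : ∀ j : Fin k, U j (v i₀) = 0 := by
    intro j
    show (d (v i₀) (v i₀) + d (v j) (v i₀) - d (v i₀) (v j)) / 2 = 0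
    rw [SchurAux.d_refl hd, SchurAux.d_symm htree hw hd (v i₀) (v j)]
    ring
  -- harmonicity on interior vertices
  have hharm : ∀ (l : Fin k), l ≠ i₀ →
      Lhat *ᵥ (fun s : {u : V // G.degree u ≠ 1} => U l (s : V))
        = B *ᵥ (fun m => U l (v m)) := by
    intro l hl
    funext s
    have h0 : (weightedLaplacian G w *ᵥ U l) (s : V) = 0 := by
      rw [hLu l hl]
      rw [if_neg (fun heq => s.2 (by rw [heq]; exact hleaf l)),
        if_neg (fun heq => s.2 (by rw [heq]; exact hleaf i₀)), sub_zero]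
    have key : (∑ j, weightedLaplacian G w (s : V) (v j) * U l (v j))
        + (∑ t : {u : V // G.degree u ≠ 1},
            weightedLaplacian G w (s : V) (t : V) * U l (t : V)) = 0 := by
      rw [← hsplit (fun b => weightedLaplacian G w (s : V) b * U l b)]
      exact h0
    have hB : (B *ᵥ fun m => U l (v m)) s
        = -∑ j, weightedLaplacian G w (s : V) (v j) * U l (v j) := by
      show ∑ j, -(weightedLaplacian G w (s : V) (v j)) * U l (v j) = _
      rw [← Finset.sum_neg_distrib]
      apply Finset.sum_congr rfl
      intro j _
      ring
    have hLh : (Lhat *ᵥ fun s : {u : V // G.degree u ≠ 1} => U l (s : V)) s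
        = ∑ t : {u : V // G.degree u ≠ 1},
            weightedLaplacian G w (s : V) (t : V) * U l (t : V) := rfl
    rw [hLh, hB]
    linarith [key]
  -- the Schur complement applied to the potential column
  have hScol : ∀ l : Fin k, l ≠ i₀ → ∀ i : Fin k,
      (S *ᵥ fun m => U l (v m)) i
        = (if i = l then (1:ℝ) else 0) - (if i = i₀ then 1 else 0) := by
    intro l hl i
    have hy : Lhat⁻¹ *ᵥ (B *ᵥ fun m => U l (v m))
        = fun s : {u : V // G.degree u ≠ 1} => U l (s : V) := by
      rw [← hharm l hl, Matrix.mulVec_mulVec, Matrix.nonsing_inv_mul _ hLhatDet,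
        Matrix.one_mulVec]
    have hSx : S *ᵥ (fun m => U l (v m))
        = Dhat *ᵥ (fun m => U l (v m))
          - Bᵀ *ᵥ (Lhat⁻¹ *ᵥ (B *ᵥ fun m => U l (v m))) := by
      rw [Matrix.sub_mulVec, ← Matrix.mulVec_mulVec, ← Matrix.mulVec_mulVec]
    have h1 : (Dhat *ᵥ fun m => U l (v m)) i
        = ∑ j, weightedLaplacian G w (v i) (v j) * U l (v j) := rfl
    have h2 : (Bᵀ *ᵥ fun s : {u : V // G.degree u ≠ 1} => U l (s : V)) i
        = -∑ t : {u : V // G.degree u ≠ 1},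
            weightedLaplacian G w (v i) (t : V) * U l (t : V) := by
      show ∑ t : {u : V // G.degree u ≠ 1},
          -(weightedLaplacian G w (t : V) (v i)) * U l (t : V) = _
      rw [← Finset.sum_neg_distrib]
      apply Finset.sum_congr rfl
      intro t _
      rw [SchurAux.lap_symm hw]
      ring
    have hmain : (S *ᵥ fun m => U l (v m)) i
        = (weightedLaplacian G w *ᵥ U l) (v i) := by
      rw [hSx, hy, Pi.sub_apply, h1, h2, sub_neg_eq_add,
        ← hsplit (fun b => weightedLaplacian G w (v i) b * U l b)]
      rfl
    rw [hmain, hLu l hl]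
    by_cases hil : i = l
    · subst hil
      rw [if_pos rfl, if_pos rfl]
      by_cases hii : i = i₀
      · exact absurd hii hl
      · rw [if_neg hii, if_neg (hvne hii)]
    · rw [if_neg hil, if_neg (hvne hil)]
      by_cases hii : i = i₀
      · subst hii
        rw [if_pos rfl, if_pos rfl]
      · rw [if_neg hii, if_neg (hvne hii)]
  -- the explicit inverse matrix
  set M : Matrix (Fin k) (Fin k) ℝ := Matrix.of fun m j =>
    if j = i₀ then (if m = i₀ then (1:ℝ) else 0) else U j (v m) with hM
  have hMapp : ∀ m j, M m j
      = if j = i₀ then (if m = i₀ then (1:ℝ) else 0) else U j (v m) := fun _ _ => rfl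
  have hSiapp : ∀ i m, Si₀ i m
      = if i = i₀ then (if m = i₀ then (1:ℝ) else 0)
        else if m = i₀ then 0 else S i m := fun _ _ => rfl
  have hSM : Si₀ * M = 1 := by
    ext i j
    rw [Matrix.mul_apply, Matrix.one_apply]
    by_cases hj : j = i₀
    · rw [hj]
      rw [Finset.sum_eq_single i₀]
      · rw [hMapp, if_pos rfl, if_pos rfl, mul_one, hSiapp]
        by_cases hii : i = i₀
        · rw [if_pos hii, if_pos rfl, if_pos hii]
        · rw [if_neg hii, if_pos rfl, if_neg hii]
      · intro m _ hm
        rw [hMapp, if_pos rfl, if_neg hm, mul_zero]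
      · intro hm
        exact absurd (Finset.mem_univ i₀) hm
    · by_cases hii : i = i₀
      · rw [hii]
        rw [Finset.sum_eq_single i₀]
        · rw [hSiapp, if_pos rfl, if_pos rfl, one_mul, hMapp, if_neg hj,
            hU_i₀ j, if_neg (fun h => hj h.symm)]
        · intro m _ hm
          rw [hSiapp, if_pos rfl, if_neg hm, zero_mul]
        · intro hm
          exact absurd (Finset.mem_univ _) hm
      · have hterm : ∀ m, Si₀ i m * M m j = S i m * U j (v m) := by
          intro m
          rw [hSiapp, if_neg hii, hMapp, if_neg hj]
          by_cases hm : m = i₀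
          · subst hm
            rw [if_pos rfl, hU_i₀ j, zero_mul, mul_zero]
          · rw [if_neg hm]
        rw [Finset.sum_congr rfl (fun m _ => hterm m)]
        have := hScol j hj i
        rw [show (∑ m, S i m * U j (v m)) = (S *ᵥ fun m => U j (v m)) i from rfl, this,
          if_neg hii, sub_zero]
  refine ⟨(Matrix.isUnit_iff_isUnit_det _).mpr (Matrix.isUnit_det_of_right_inverse hSM), ?_⟩
  intro j hj
  rw [Matrix.inv_eq_right_inv hSM, hMapp, if_neg hj]
  show (d (v j) (v i₀) + d (v j) (v i₀) - d (v j) (v j)) / 2 = d (v j) (v i₀)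
  rw [SchurAux.d_refl hd]
  ring
end

section
/- Let G be a weighted graph on finite vertex set V, let B ⊆ V be a nonempty proper subset of V, and let e be an edge of G joining vertices u and v with weight w_e. Let G' be the weighted graph obtained from G by deleting the edge e and adding a new vertex x together with two new edges {u,x} and {x,v} of weights w₁ > 0 and w₂ > 0 satisfying 1/w₁ + 1/w₂ = 1/w_e. Then the Schur complement of the weighted Laplacian L(G') with respect to B equals the Schur complement of the weighted Laplacian L(G) with respect to B. -/
open Finset Matrix

/-- The Schur complement of a matrix `M` with respect to a set of indices `B`, i.e.
`D̂ - (top right block) * (lower right block)⁻¹ * (bottom left block)` for the block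
decomposition of `M` given by `B` and its complement. -/
noncomputable def schurCompl {V : Type*} [Fintype V] [DecidableEq V] (M : Matrix V V ℝ)
    (B : Set V) [DecidablePred (· ∈ B)] : Matrix B B ℝ :=
  M.submatrix (fun i : B => (i : V)) (fun j : B => (j : V)) -
    (Matrix.of fun (i : B) (c : {x : V // x ∉ B}) => M i c) *
      (M.submatrix (fun c : {x : V // x ∉ B} => (c : V))
        (fun c : {x : V // x ∉ B} => (c : V)))⁻¹ *
      (Matrix.of fun (c : {x : V // x ∉ B}) (j : B) => M c j)

/-- The graph obtained from `G` by subdividing the edge between `u` and `v`: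
the edge `{u, v}` is removed and a new vertex (`none`) is joined to both `u` and `v`. -/
def subdivide {V : Type*} (G : SimpleGraph V) (u v : V) : SimpleGraph (Option V) where
  Adj a b :=
    match a, b with
    | some a', some b' => G.Adj a' b' ∧ ¬(a' = u ∧ b' = v) ∧ ¬(a' = v ∧ b' = u)
    | some a', none => a' = u ∨ a' = v
    | none, some b' => b' = u ∨ b' = v
    | none, none => False
  symm := by
    constructor
    intro a b h
    match a, b with
    | some a', some b' => exact ⟨h.1.symm, fun hc => h.2.2 ⟨hc.2, hc.1⟩,
        fun hc => h.2.1 ⟨hc.2, hc.1⟩⟩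
    | some a', none => exact h
    | none, some b' => exact h
  loopless := by
    constructor
    intro a
    match a with
    | some a' => exact fun h => G.irrefl h.1
    | none => exact fun h => h

instance {V : Type*} [DecidableEq V] (G : SimpleGraph V) [DecidableRel G.Adj] (u v : V) :
    DecidableRel (subdivide G u v).Adj := fun a b =>
  match a, b with
  | some a', some b' =>
      inferInstanceAs (Decidable (G.Adj a' b' ∧ ¬(a' = u ∧ b' = v) ∧ ¬(a' = v ∧ b' = u)))
  | some a', none => inferInstanceAs (Decidable (a' = u ∨ a' = v))
  | none, some b' => inferInstanceAs (Decidable (b' = u ∨ b' = v))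
  | none, none => inferInstanceAs (Decidable False)

/-- The image of a set of vertices in the vertex set of the subdivided graph. -/
def liftSet {V : Type*} (B : Set V) : Set (Option V) := {y | ∃ x ∈ B, y = some x}

instance {V : Type*} (B : Set V) [DecidablePred (· ∈ B)] :
    DecidablePred (· ∈ liftSet B) := fun y =>
  match y with
  | none => isFalse (by simp [liftSet])
  | some a => decidable_of_iff (a ∈ B) (by simp [liftSet])

lemma lap_submatrix_det_ne_zero {V : Type*} [Fintype V] [DecidableEq V]
    (G : SimpleGraph V) [DecidableRel G.Adj] (hconn : G.Connected)
    (w : V → V → ℝ) (hw : ∀ a b, w a b = w b a)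
    (hpos : ∀ a b, G.Adj a b → 0 < w a b)
    (B : Set V) [DecidablePred (· ∈ B)] (hB : B.Nonempty) :
    ((weightedLaplacian G w).submatrix (fun c : {x : V // x ∉ B} => (c : V))
      (fun c : {x : V // x ∉ B} => (c : V))).det ≠ 0 := by
  classical
  rw [Ne, ← Matrix.exists_mulVec_eq_zero_iff]
  rintro ⟨x, hx0, hx⟩
  apply hx0
  set L : Matrix V V ℝ := weightedLaplacian G w with hLdef
  set y : V → ℝ := fun i => if h : i ∉ B then x ⟨i, h⟩ else 0 with hy
  -- the rows of L indexed by the complement of B kill y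
  have key : ∀ a : {x : V // x ∉ B}, ∑ b : V, L a.1 b * y b = 0 := by
    intro a
    have h0 : ∀ b : V, L a.1 b * y b =
        (if h : b ∉ B then L a.1 b * x ⟨b, h⟩ else 0) := by
      intro b
      by_cases hb : b ∉ B <;> simp [hy, hb]
    calc ∑ b : V, L a.1 b * y b
        = ∑ b : V, (if h : b ∉ B then L a.1 b * x ⟨b, h⟩ else 0) :=
          Finset.sum_congr rfl fun b _ => h0 b
      _ = (∑ b : {x : V // x ∉ B}, L a.1 b.1 * x b) +
            ∑ b : {x : V // ¬ x ∉ B}, 0 := by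
          rw [← Fintype.sum_subtype_add_sum_subtype (· ∉ B)
            (fun b => if h : b ∉ B then L a.1 b * x ⟨b, h⟩ else 0)]
          congr 1
          · exact Finset.sum_congr rfl fun b _ => by rw [dif_pos b.2]
          · exact Finset.sum_congr rfl fun b _ => by rw [dif_neg b.2]
      _ = 0 := by
          have := congrFun hx a
          simpa [Matrix.mulVec, dotProduct, Matrix.submatrix_apply] using this
  -- quadratic form vanishes
  have hform0 : ∑ a : V, ∑ b : V, y a * L a b * y b = 0 := by
    apply Finset.sum_eq_zero
    intro a _
    by_cases ha : a ∉ B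
    · rw [show ∑ b : V, y a * L a b * y b = y a * ∑ b : V, L a b * y b by
        rw [Finset.mul_sum]; exact Finset.sum_congr rfl fun b _ => by ring]
      rw [key ⟨a, ha⟩, mul_zero]
    · have : y a = 0 := by simp [hy, ha]
      simp [this]
  -- rewrite the quadratic form as a sum over edges
  have hformula : ∑ a : V, ∑ b : V, y a * L a b * y b =
      ∑ a : V, ∑ b : V, (if G.Adj a b then w a b * (y a * y a - y a * y b) else 0) := by
    have h1 : ∀ a b : V, y a * L a b * y b =
        (if a = b then y a * y a * (∑ k ∈ Finset.univ.filter (G.Adj a ·), w a k) else 0)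
          + (if G.Adj a b then -(w a b * y a * y b) else 0) := by
      intro a b
      by_cases hab : a = b
      · subst hab
        simp [hLdef, weightedLaplacian, G.irrefl]
        ring
      · simp only [hLdef, weightedLaplacian, Matrix.of_apply, if_neg hab]
        split_ifs <;> ring
    calc ∑ a : V, ∑ b : V, y a * L a b * y b
        = ∑ a : V, ((y a * y a * (∑ k ∈ Finset.univ.filter (G.Adj a ·), w a k))
            + ∑ b : V, (if G.Adj a b then -(w a b * y a * y b) else 0)) := by
          refine Finset.sum_congr rfl fun a _ => ?_
          rw [show (∑ b : V, y a * L a b * y b) = ∑ b : V,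
            ((if a = b then y a * y a * (∑ k ∈ Finset.univ.filter (G.Adj a ·), w a k) else 0)
              + (if G.Adj a b then -(w a b * y a * y b) else 0)) from
            Finset.sum_congr rfl fun b _ => h1 a b]
          rw [Finset.sum_add_distrib, Finset.sum_ite_eq Finset.univ a
            (fun _ => y a * y a * (∑ k ∈ Finset.univ.filter (G.Adj a ·), w a k))]
          simp
      _ = ∑ a : V, ∑ b : V, (if G.Adj a b then w a b * (y a * y a - y a * y b) else 0) := by
          refine Finset.sum_congr rfl fun a _ => ?_
          rw [Finset.sum_filter]
          rw [show y a * y a * (∑ k : V, if G.Adj a k then w a k else 0)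
            = ∑ k : V, (if G.Adj a k then w a k * (y a * y a) else 0) by
              rw [Finset.mul_sum]
              exact Finset.sum_congr rfl fun k _ => by split_ifs <;> ring]
          rw [← Finset.sum_add_distrib]
          exact Finset.sum_congr rfl fun b _ => by split_ifs <;> ring
  -- symmetrize
  have hsym : ∑ a : V, ∑ b : V, (if G.Adj a b then w a b * (y a * y a - y a * y b) else 0)
      = ∑ a : V, ∑ b : V, (if G.Adj a b then w a b * (y b * y b - y b * y a) else 0) := by
    rw [Finset.sum_comm]
    refine Finset.sum_congr rfl fun a _ => Finset.sum_congr rfl fun b _ => ?_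
    by_cases h : G.Adj a b
    · rw [if_pos h, if_pos h.symm, hw b a]
    · rw [if_neg h, if_neg fun h' => h h'.symm]
  have hsq : ∑ a : V, ∑ b : V, (if G.Adj a b then w a b * (y a - y b)^2 else 0) = 0 := by
    have : ∑ a : V, ∑ b : V, (if G.Adj a b then w a b * (y a - y b)^2 else 0)
        = (∑ a : V, ∑ b : V, (if G.Adj a b then w a b * (y a * y a - y a * y b) else 0))
          + ∑ a : V, ∑ b : V, (if G.Adj a b then w a b * (y b * y b - y b * y a) else 0) := by
      rw [← Finset.sum_add_distrib]
      refine Finset.sum_congr rfl fun a _ => ?_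
      rw [← Finset.sum_add_distrib]
      refine Finset.sum_congr rfl fun b _ => ?_
      split_ifs <;> ring
    rw [this, ← hsym, ← hformula, hform0, add_zero]
  -- every edge term is zero
  have hinner : ∀ a : V, ∑ b : V, (if G.Adj a b then w a b * (y a - y b)^2 else 0) = 0 := by
    have hnn : ∀ a ∈ Finset.univ (α := V),
        (0:ℝ) ≤ ∑ b : V, (if G.Adj a b then w a b * (y a - y b)^2 else 0) :=
      fun a _ => Finset.sum_nonneg fun b _ => by
        split_ifs with h
        · exact mul_nonneg (hpos a b h).le (sq_nonneg _)
        · exact le_refl 0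
    exact fun a => (Finset.sum_eq_zero_iff_of_nonneg hnn).mp hsq a (Finset.mem_univ a)
  have hedge : ∀ a b : V, G.Adj a b → y a = y b := by
    intro a b hab
    have hterm := (Finset.sum_eq_zero_iff_of_nonneg (fun b _ => by
        split_ifs with h
        · exact mul_nonneg (hpos a b h).le (sq_nonneg _)
        · exact le_refl 0)).mp (hinner a) b (Finset.mem_univ b)
    rw [if_pos hab] at hterm
    have h3 := (mul_eq_zero.mp hterm).resolve_left (ne_of_gt (hpos a b hab))
    have h4 : y a - y b = 0 := by
      nlinarith [sq_nonneg (y a - y b), sq_abs (y a - y b)]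
    linarith
  have hwalk : ∀ {a b : V}, G.Walk a b → y a = y b := by
    intro a b p
    induction p with
    | nil => rfl
    | cons h p ih => exact (hedge _ _ h).trans ih
  obtain ⟨b0, hb0⟩ := hB
  have hy0 : ∀ a : V, y a = 0 := by
    intro a
    have h1 : y a = y b0 := (hconn.preconnected a b0).elim fun p => hwalk p
    rw [h1]
    simp [hy, hb0]
  funext cc
  have h2 : y cc.1 = x cc := by simp [hy, cc.2]
  simp [← h2, hy0]

/-- subdividing an edge `{u, v}` of weight `w_e` into two edges of weights
`w₁, w₂` with `1/w₁ + 1/w₂ = 1/w_e` does not change the Schur complement of the weighted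
Laplacian with respect to a nonempty proper subset `B` of the original vertices. -/
theorem schur_complement_invariant_under_subdivision
    {V : Type*} [Fintype V] [DecidableEq V]
    (G : SimpleGraph V) [DecidableRel G.Adj] (hconn : G.Connected)
    (w : V → V → ℝ) (hw : ∀ a b, w a b = w b a)
    (hpos : ∀ a b, G.Adj a b → 0 < w a b)
    (B : Set V) [DecidablePred (· ∈ B)] (hB : B.Nonempty) (hBproper : B ≠ Set.univ)
    (u v : V) (huv : G.Adj u v)
    (w₁ w₂ : ℝ) (hw₁ : 0 < w₁) (hw₂ : 0 < w₂)
    (hsplit : 1 / w₁ + 1 / w₂ = 1 / w u v) :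
    ∀ i j : B,
      schurCompl
        (weightedLaplacian (subdivide G u v)
          (fun a b =>
            match a, b with
            | some a', some b' => w a' b'
            | some a', none => if a' = u then w₁ else w₂
            | none, some b' => if b' = u then w₁ else w₂
            | none, none => 0))
        (liftSet B)
        ⟨some (i : V), ⟨(i : V), i.2, rfl⟩⟩ ⟨some (j : V), ⟨(j : V), j.2, rfl⟩⟩ =
      schurCompl (weightedLaplacian G w) B i j := by
  classical
  intro i j
  have hne : u ≠ v := huv.ne
  have hvu : v ≠ u := hne.symm
  have hwuv : 0 < w u v := hpos u v huv
  obtain ⟨d, hd⟩ : ∃ x : ℝ, x = w₁ + w₂ := ⟨_, rfl⟩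
  have hd0 : d ≠ 0 := by rw [hd]; positivity
  have hwe : w u v * d = w₁ * w₂ := by
    have h1 : w₁ ≠ 0 := ne_of_gt hw₁
    have h2 : w₂ ≠ 0 := ne_of_gt hw₂
    have h3 : w u v ≠ 0 := ne_of_gt hwuv
    field_simp at hsplit
    rw [hd]
    linear_combination hsplit
  set L' : Matrix (Option V) (Option V) ℝ :=
    weightedLaplacian (subdivide G u v)
      (fun a b =>
        match a, b with
        | some a', some b' => w a' b'
        | some a', none => if a' = u then w₁ else w₂
        | none, some b' => if b' = u then w₁ else w₂
        | none, none => 0) with hL'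
  set L : Matrix V V ℝ := weightedLaplacian G w with hL
  obtain ⟨c, hc⟩ : ∃ f : V → ℝ,
      f = fun a => -((if a = u then w₁ else 0) + (if a = v then w₂ else 0)) := ⟨_, rfl⟩
  have hcu : c u = -w₁ := by simp [hc, hne]
  have hcv : c v = -w₂ := by simp [hc, hvu]
  have hc0 : ∀ a : V, a ≠ u → a ≠ v → c a = 0 := by
    intro a h1 h2; simp [hc, h1, h2]
  have hadjSS : ∀ a b : V, (subdivide G u v).Adj (some a) (some b) ↔
      (G.Adj a b ∧ ¬(a = u ∧ b = v) ∧ ¬(a = v ∧ b = u)) := fun a b => Iff.rfl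
  have hadjSN : ∀ a : V, (subdivide G u v).Adj (some a) none ↔ (a = u ∨ a = v) :=
    fun a => Iff.rfl
  have hadjNS : ∀ a : V, (subdivide G u v).Adj none (some a) ↔ (a = u ∨ a = v) :=
    fun a => Iff.rfl
  have hrow : ∀ a : V, L' (some a) none = c a := by
    intro a
    simp only [hL', weightedLaplacian, Matrix.of_apply]
    rw [if_neg (by simp : ¬((some a : Option V) = none))]
    by_cases h1 : a = u
    · rw [if_pos ((hadjSN a).mpr (Or.inl h1)), if_pos h1, h1, hcu]
    · by_cases h2 : a = v
      · rw [if_pos ((hadjSN a).mpr (Or.inr h2)), if_neg h1, h2, hcv]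
      · rw [if_neg (fun h => ((hadjSN a).mp h).elim h1 h2), hc0 a h1 h2]
  have hcol : ∀ a : V, L' none (some a) = c a := by
    intro a
    simp only [hL', weightedLaplacian, Matrix.of_apply]
    rw [if_neg (by simp : ¬((none : Option V) = some a))]
    by_cases h1 : a = u
    · rw [if_pos ((hadjNS a).mpr (Or.inl h1)), if_pos h1, h1, hcu]
    · by_cases h2 : a = v
      · rw [if_pos ((hadjNS a).mpr (Or.inr h2)), if_neg h1, h2, hcv]
      · rw [if_neg (fun h => ((hadjNS a).mp h).elim h1 h2), hc0 a h1 h2]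
  have hdnn : L' none none = d := by
    simp only [hL', weightedLaplacian, Matrix.of_apply, if_pos rfl]
    rw [Finset.sum_filter, Fintype.sum_option]
    rw [if_neg (show ¬ (subdivide G u v).Adj none none from fun h => h)]
    have hpt : ∀ k : V, (if (subdivide G u v).Adj none (some k)
          then (if k = u then w₁ else w₂) else 0)
        = (if k = u then w₁ else 0) + (if k = v then w₂ else 0) := by
      intro k
      by_cases h1 : k = u
      · rw [if_pos ((hadjNS k).mpr (Or.inl h1)), if_pos h1, if_pos h1,
          if_neg (fun h => hne (h1.symm.trans h)), add_zero]
      · by_cases h2 : k = v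
        · rw [if_pos ((hadjNS k).mpr (Or.inr h2)), if_neg h1, if_neg h1, if_pos h2, zero_add]
        · rw [if_neg (fun h => ((hadjNS k).mp h).elim h1 h2), if_neg h1, if_neg h2, add_zero]
    rw [Finset.sum_congr rfl fun k _ => hpt k, Finset.sum_add_distrib]
    simp [Finset.sum_ite_eq', hd]
  have hpoint : ∀ a k : V, (if (subdivide G u v).Adj (some a) (some k) then w a k else 0)
      = (if G.Adj a k then w a k else 0) - (if a = u ∧ k = v then w u v else 0)
        - (if a = v ∧ k = u then w u v else 0) := by
    intro a k
    by_cases h1 : a = u ∧ k = v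
    · obtain ⟨ha, hk⟩ := h1
      rw [ha, hk]
      rw [if_neg (show ¬ (subdivide G u v).Adj (some u) (some v) from
            fun hh => hh.2.1 ⟨rfl, rfl⟩),
        if_pos huv, if_pos ⟨rfl, rfl⟩, if_neg (fun hh : u = v ∧ v = u => hne hh.1)]
      ring
    · by_cases h2 : a = v ∧ k = u
      · obtain ⟨ha, hk⟩ := h2
        rw [ha, hk]
        rw [if_neg (show ¬ (subdivide G u v).Adj (some v) (some u) from
              fun hh => hh.2.2 ⟨rfl, rfl⟩),
          if_pos huv.symm, if_neg (fun hh : v = u ∧ u = v => hne hh.2),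
          if_pos ⟨rfl, rfl⟩, hw v u]
        ring
      · have hA : (subdivide G u v).Adj (some a) (some k) ↔ G.Adj a k :=
          ⟨fun h => h.1, fun h => ⟨h, h1, h2⟩⟩
        rw [if_congr hA rfl rfl, if_neg h1, if_neg h2]
        ring
  have hF1 : ∀ a b : V, L' (some a) (some b) = L a b + c a * c b / d := by
    intro a b
    by_cases hab : a = b
    · subst hab
      simp only [hL', hL, weightedLaplacian, Matrix.of_apply, eq_self_iff_true, if_true]
      rw [Finset.sum_filter, Finset.sum_filter, Fintype.sum_option]
      rw [Finset.sum_congr rfl fun k _ => hpoint a k]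
      simp only [Finset.sum_sub_distrib]
      have e1 : ∑ k : V, (if a = u ∧ k = v then w u v else 0)
          = if a = u then w u v else 0 := by
        by_cases h : a = u <;> simp [h, Finset.sum_ite_eq']
      have e2 : ∑ k : V, (if a = v ∧ k = u then w u v else 0)
          = if a = v then w u v else 0 := by
        by_cases h : a = v <;> simp [h, Finset.sum_ite_eq']
      rw [e1, e2]
      by_cases h1 : a = u
      · rw [if_pos ((hadjSN a).mpr (Or.inl h1)), if_pos h1, if_pos h1,
          if_neg (fun h => hne (h1.symm.trans h)), h1, hcu]
        have hkey : w₁ - w u v = -w₁ * -w₁ / d := by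
          rw [eq_div_iff hd0]
          linear_combination w₁ * hd - hwe
        linear_combination hkey
      · by_cases h2 : a = v
        · rw [if_pos ((hadjSN a).mpr (Or.inr h2)), if_neg h1, if_neg h1, if_pos h2, h2, hcv]
          have hkey : w₂ - w u v = -w₂ * -w₂ / d := by
            rw [eq_div_iff hd0]
            linear_combination w₂ * hd - hwe
          linear_combination hkey
        · rw [if_neg (fun h => ((hadjSN a).mp h).elim h1 h2), if_neg h1, if_neg h2,
            hc0 a h1 h2]
          ring
    · have hab' : (some a : Option V) ≠ some b := fun h => hab (Option.some_injective V h)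
      simp only [hL', hL, weightedLaplacian, Matrix.of_apply, if_neg hab, if_neg hab']
      by_cases h1 : a = u ∧ b = v
      · obtain ⟨ha, hb2⟩ := h1
        rw [ha, hb2]
        rw [if_neg (show ¬ (subdivide G u v).Adj (some u) (some v) from
              fun hh => hh.2.1 ⟨rfl, rfl⟩),
          if_pos huv, hcu, hcv]
        have hkey : w u v = -w₁ * -w₂ / d := by
          rw [eq_div_iff hd0]
          linear_combination hwe
        linear_combination hkey
      · by_cases h2 : a = v ∧ b = u
        · obtain ⟨ha, hb2⟩ := h2
          rw [ha, hb2]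
          rw [if_neg (show ¬ (subdivide G u v).Adj (some v) (some u) from
                fun hh => hh.2.2 ⟨rfl, rfl⟩),
            if_pos huv.symm, hcv, hcu, hw v u]
          have hkey : w u v = -w₂ * -w₁ / d := by
            rw [eq_div_iff hd0]
            linear_combination hwe
          linear_combination hkey
        · have hA : (subdivide G u v).Adj (some a) (some b) ↔ G.Adj a b :=
            ⟨fun h => h.1, fun h => ⟨h, h1, h2⟩⟩
          rw [if_congr hA rfl rfl]
          have hcc : c a * c b = 0 := by
            by_cases ha1 : a = u
            · have hbv : b ≠ v := fun h => h1 ⟨ha1, h⟩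
              have hbu : b ≠ u := fun h => hab (ha1.trans h.symm)
              rw [hc0 b hbu hbv, mul_zero]
            · by_cases ha2 : a = v
              · have hbu : b ≠ u := fun h => h2 ⟨ha2, h⟩
                have hbv : b ≠ v := fun h => hab (ha2.trans h.symm)
                rw [hc0 b hbu hbv, mul_zero]
              · rw [hc0 a ha1 ha2, zero_mul]
          rw [hcc, zero_div, add_zero]
  -- Part 2: the complement index set and the explicit inverse
  have hmem : ∀ a : V, ((some a : Option V) ∈ liftSet B) ↔ a ∈ B := by
    intro a; simp [liftSet]
  have hnoneMem : (none : Option V) ∉ liftSet B := by simp [liftSet]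
  set e : Option {x : V // x ∉ B} ≃ {y : Option V // y ∉ liftSet B} :=
    { toFun := fun k => k.elim ⟨none, hnoneMem⟩
        (fun a => ⟨some a.1, fun h => a.2 ((hmem a.1).mp h)⟩)
      invFun := fun m => match m with
        | ⟨none, _⟩ => none
        | ⟨some a, h⟩ => some ⟨a, fun hb => h ((hmem a).mpr hb)⟩
      left_inv := by rintro (_ | a) <;> rfl
      right_inv := by rintro ⟨(_ | a), h⟩ <;> rfl } with he
  set P : Matrix {x : V // x ∉ B} {x : V // x ∉ B} ℝ :=
    L.submatrix (fun c : {x : V // x ∉ B} => (c : V)) (fun c : {x : V // x ∉ B} => (c : V))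
    with hPdef
  have hPdet : P.det ≠ 0 := by
    rw [hPdef, hL]
    exact lap_submatrix_det_ne_zero G hconn w hw hpos B hB
  have hPid : P * P⁻¹ = 1 := Matrix.mul_nonsing_inv P (isUnit_iff_ne_zero.mpr hPdet)
  have hPmul : ∀ a b : {x : V // x ∉ B},
      ∑ m : {x : V // x ∉ B}, P a m * P⁻¹ m b = if a = b then 1 else 0 := by
    intro a b
    have h0 := congrFun (congrFun hPid a) b
    simpa [Matrix.mul_apply, Matrix.one_apply] using h0
  have hPentry : ∀ a b : {x : V // x ∉ B}, L (↑a) ↑b = P a b := fun _ _ => rfl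
  -- auxiliary sum identities
  have hg : ∀ a : {x : V // x ∉ B},
      ∑ m : {x : V // x ∉ B}, P a m * (∑ x : {x : V // x ∉ B}, P⁻¹ m x * c ↑x) = c ↑a := by
    intro a
    rw [Finset.sum_congr rfl (fun m _ => show
        P a m * (∑ x : {x : V // x ∉ B}, P⁻¹ m x * c ↑x)
          = ∑ x : {x : V // x ∉ B}, P a m * P⁻¹ m x * c ↑x from by
      rw [Finset.mul_sum]
      exact Finset.sum_congr rfl fun x _ => by ring)]
    rw [Finset.sum_comm]
    rw [Finset.sum_congr rfl (fun x _ => show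
        ∑ m : {x : V // x ∉ B}, P a m * P⁻¹ m x * c ↑x = (if a = x then 1 else 0) * c ↑x from by
      rw [← hPmul a x, Finset.sum_mul])]
    simp [ite_mul]
  have hSwap : ∑ m : {x : V // x ∉ B}, c ↑m * (∑ x : {x : V // x ∉ B}, P⁻¹ m x * c ↑x)
      = ∑ x : {x : V // x ∉ B}, (∑ y : {x : V // x ∉ B}, c ↑y * P⁻¹ y x) * c ↑x := by
    simp only [Finset.mul_sum, Finset.sum_mul]
    rw [Finset.sum_comm]
    exact Finset.sum_congr rfl fun x _ => Finset.sum_congr rfl fun y _ => by ring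
  -- the explicit inverse of the lower-right block
  set M₀ : Matrix (Option {x : V // x ∉ B}) (Option {x : V // x ∉ B}) ℝ := fun k l =>
    match k, l with
    | some a, some b => P⁻¹ a b
    | some a, none => -(∑ x : {x : V // x ∉ B}, P⁻¹ a x * c ↑x) / d
    | none, some b => -(∑ x : {x : V // x ∉ B}, c ↑x * P⁻¹ x b) / d
    | none, none => 1 / d +
        (∑ x : {x : V // x ∉ B}, (∑ y : {x : V // x ∉ B}, c ↑y * P⁻¹ y x) * c ↑x) / d ^ 2
    with hM₀
  have hM0ss : ∀ a b : {x : V // x ∉ B}, M₀ (some a) (some b) = P⁻¹ a b := fun _ _ => rfl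
  have hM0sn : ∀ a : {x : V // x ∉ B},
      M₀ (some a) none = -(∑ x : {x : V // x ∉ B}, P⁻¹ a x * c ↑x) / d := fun _ => rfl
  have hM0ns : ∀ b : {x : V // x ∉ B},
      M₀ none (some b) = -(∑ x : {x : V // x ∉ B}, c ↑x * P⁻¹ x b) / d := fun _ => rfl
  have hM0nn : M₀ none none = 1 / d +
      (∑ x : {x : V // x ∉ B}, (∑ y : {x : V // x ∉ B}, c ↑y * P⁻¹ y x) * c ↑x) / d ^ 2 := rfl
  set Minv : Matrix {y : Option V // y ∉ liftSet B} {y : Option V // y ∉ liftSet B} ℝ :=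
    M₀.submatrix ⇑e.symm ⇑e.symm with hMinvdef
  have hMinv : ∀ k l : Option {x : V // x ∉ B}, Minv (e k) (e l) = M₀ k l := by
    intro k l
    simp only [hMinvdef, Matrix.submatrix_apply, Equiv.symm_apply_apply]
  have hE1 : ∀ a : {x : V // x ∉ B},
      ((e (some a) : {y : Option V // y ∉ liftSet B}) : Option V) = some ↑a := fun _ => rfl
  have hE2 : ((e none : {y : Option V // y ∉ liftSet B}) : Option V) = none := rfl
  have hone : ∀ k l : Option {x : V // x ∉ B},
      (1 : Matrix {y : Option V // y ∉ liftSet B} {y : Option V // y ∉ liftSet B} ℝ)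
        (e k) (e l) = if k = l then 1 else 0 := by
    intro k l
    simp only [Matrix.one_apply, EmbeddingLike.apply_eq_iff_eq]
  have hNM : (L'.submatrix (fun cc : {x : Option V // x ∉ liftSet B} => (cc : Option V))
        (fun cc : {x : Option V // x ∉ liftSet B} => (cc : Option V))) * Minv = 1 := by
    ext k l
    obtain ⟨k, rfl⟩ := e.surjective k
    obtain ⟨l, rfl⟩ := e.surjective l
    rw [Matrix.mul_apply]
    rw [← Equiv.sum_comp e (fun m =>
      (L'.submatrix (fun cc : {x : Option V // x ∉ liftSet B} => (cc : Option V))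
        (fun cc : {x : Option V // x ∉ liftSet B} => (cc : Option V))) (e k) m * Minv m (e l))]
    simp only [Matrix.submatrix_apply, hMinv]
    rw [hone k l, Fintype.sum_option]
    match k, l with
    | some a, some b =>
      simp only [hE1, hE2]
      rw [hrow, hM0ns]
      rw [Finset.sum_congr rfl (fun (m : {x : V // x ∉ B}) _ => show
        L' (some (↑a : V)) (some ↑m) * M₀ (some m) (some b)
          = (P a m + c ↑a * c ↑m / d) * P⁻¹ m b from by rw [hF1, hM0ss, hPentry])]
      rw [show ∑ m : {x : V // x ∉ B}, (P a m + c ↑a * c ↑m / d) * P⁻¹ m b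
          = (∑ m : {x : V // x ∉ B}, P a m * P⁻¹ m b)
            + (∑ m : {x : V // x ∉ B}, c ↑m * P⁻¹ m b) * (c ↑a / d) from by
        rw [Finset.sum_mul, ← Finset.sum_add_distrib]
        exact Finset.sum_congr rfl fun m _ => by ring]
      rw [hPmul a b]
      simp only [Option.some.injEq]
      ring
    | some a, none =>
      simp only [hE1, hE2]
      rw [hrow, hM0nn]
      rw [Finset.sum_congr rfl (fun (m : {x : V // x ∉ B}) _ => show
        L' (some (↑a : V)) (some ↑m) * M₀ (some m) none
          = (P a m + c ↑a * c ↑m / d)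
            * (-(∑ x : {x : V // x ∉ B}, P⁻¹ m x * c ↑x) / d) from by
        rw [hF1, hM0sn, hPentry])]
      rw [show ∑ m : {x : V // x ∉ B},
            (P a m + c ↑a * c ↑m / d) * (-(∑ x : {x : V // x ∉ B}, P⁻¹ m x * c ↑x) / d)
          = (∑ m : {x : V // x ∉ B},
              ((-(P a m * (∑ x : {x : V // x ∉ B}, P⁻¹ m x * c ↑x))) / d
                - c ↑m * (∑ x : {x : V // x ∉ B}, P⁻¹ m x * c ↑x) * (c ↑a / d ^ 2))) from
        Finset.sum_congr rfl fun m _ => by ring]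
      rw [Finset.sum_sub_distrib, ← Finset.sum_div, Finset.sum_neg_distrib, ← Finset.sum_mul]
      rw [hg a, hSwap]
      rw [if_neg (by simp)]
      ring
    | none, some b =>
      simp only [hE1, hE2]
      rw [hdnn, hM0ns]
      rw [Finset.sum_congr rfl (fun (m : {x : V // x ∉ B}) _ => show
        L' none (some ↑m) * M₀ (some m) (some b) = c ↑m * P⁻¹ m b from by
        rw [hcol, hM0ss])]
      rw [if_neg (by simp)]
      have h9 : ∀ s : ℝ, d * (-s / d) + s = 0 := fun s => by
        field_simp
        ring
      exact h9 _
    | none, none =>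
      simp only [hE1, hE2]
      rw [hdnn, hM0nn]
      rw [Finset.sum_congr rfl (fun (m : {x : V // x ∉ B}) _ => show
        L' none (some ↑m) * M₀ (some m) none
          = c ↑m * (-(∑ x : {x : V // x ∉ B}, P⁻¹ m x * c ↑x) / d) from by
        rw [hcol, hM0sn])]
      rw [show ∑ m : {x : V // x ∉ B},
            c ↑m * (-(∑ x : {x : V // x ∉ B}, P⁻¹ m x * c ↑x) / d)
          = ∑ m : {x : V // x ∉ B},
              ((-(c ↑m * (∑ x : {x : V // x ∉ B}, P⁻¹ m x * c ↑x))) / d) from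
        Finset.sum_congr rfl fun m _ => by ring]
      rw [← Finset.sum_div, Finset.sum_neg_distrib, hSwap]
      rw [if_pos trivial]
      have h9 : ∀ s : ℝ, d * (1 / d + s / d ^ 2) + -s / d = 1 := fun s => by
        field_simp
        ring
      exact h9 _
  have hNinv : (L'.submatrix (fun cc : {x : Option V // x ∉ liftSet B} => (cc : Option V))
      (fun cc : {x : Option V // x ∉ liftSet B} => (cc : Option V)))⁻¹ = Minv :=
    Matrix.inv_eq_right_inv hNM
  -- Part 3: the Schur complement computation
  have hα : ∑ b : {x : V // x ∉ B},
        (∑ a : {x : V // x ∉ B}, L ↑i ↑a * P⁻¹ a b) * c ↑b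
      = ∑ a : {x : V // x ∉ B}, L ↑i ↑a * (∑ b : {x : V // x ∉ B}, P⁻¹ a b * c ↑b) := by
    simp only [Finset.sum_mul, Finset.mul_sum]
    rw [Finset.sum_comm]
    exact Finset.sum_congr rfl fun a _ => Finset.sum_congr rfl fun b _ => by ring
  have hInner : ∀ l : Option {x : V // x ∉ B},
      (∑ k : {y : Option V // y ∉ liftSet B}, L' (some ↑i) ↑k * Minv k (e l))
        = ∑ k : Option {x : V // x ∉ B}, L' (some ↑i) ↑(e k) * M₀ k l := by
    intro l
    rw [← Equiv.sum_comp e (fun k => L' (some ↑i) ↑k * Minv k (e l))]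
    exact Finset.sum_congr rfl fun (k : Option {x : V // x ∉ B}) _ => show
      L' (some ↑i) ↑(e k) * Minv (e k) (e l) = L' (some ↑i) ↑(e k) * M₀ k l from by
      rw [hMinv]
  have hT : ∑ l : {y : Option V // y ∉ liftSet B},
        (∑ k : {y : Option V // y ∉ liftSet B}, L' (some ↑i) ↑k * Minv k l) * L' ↑l (some ↑j)
      = (∑ b : {x : V // x ∉ B},
          (∑ a : {x : V // x ∉ B}, L ↑i ↑a * P⁻¹ a b) * L ↑b ↑j) + c ↑i * c ↑j / d := by
    rw [← Equiv.sum_comp e (fun l =>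
      (∑ k : {y : Option V // y ∉ liftSet B}, L' (some ↑i) ↑k * Minv k l) * L' ↑l (some ↑j))]
    rw [Fintype.sum_option]
    simp only [hInner]
    simp only [Fintype.sum_option]
    simp only [hE1, hE2, hM0ss, hM0sn, hM0ns, hM0nn, hrow, hcol, hdnn, hF1]
    -- the `none` outer term
    rw [show ∑ a : {x : V // x ∉ B},
          (L ↑i ↑a + c ↑i * c ↑a / d) * (-(∑ x : {x : V // x ∉ B}, P⁻¹ a x * c ↑x) / d)
        = ∑ a : {x : V // x ∉ B},
            ((-(L ↑i ↑a * (∑ x : {x : V // x ∉ B}, P⁻¹ a x * c ↑x))) / d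
              - c ↑a * (∑ x : {x : V // x ∉ B}, P⁻¹ a x * c ↑x) * (c ↑i / d ^ 2)) from
      Finset.sum_congr rfl fun a _ => by ring]
    rw [Finset.sum_sub_distrib, ← Finset.sum_div, Finset.sum_neg_distrib, ← Finset.sum_mul]
    rw [hSwap]
    -- the `some` outer terms
    rw [Finset.sum_congr rfl (fun b _ => show
        (c ↑i * (-(∑ x : {x : V // x ∉ B}, c ↑x * P⁻¹ x b) / d)
            + ∑ a : {x : V // x ∉ B}, (L ↑i ↑a + c ↑i * c ↑a / d) * P⁻¹ a b)
          * (L ↑b ↑j + c ↑b * c ↑j / d)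
        = (∑ a : {x : V // x ∉ B}, L ↑i ↑a * P⁻¹ a b) * L ↑b ↑j
          + ((∑ a : {x : V // x ∉ B}, L ↑i ↑a * P⁻¹ a b) * c ↑b) * (c ↑j / d) from by
      rw [show ∑ a : {x : V // x ∉ B}, (L ↑i ↑a + c ↑i * c ↑a / d) * P⁻¹ a b
          = (∑ a : {x : V // x ∉ B}, L ↑i ↑a * P⁻¹ a b)
            + (∑ x : {x : V // x ∉ B}, c ↑x * P⁻¹ x b) * (c ↑i / d) from by
        rw [Finset.sum_mul, ← Finset.sum_add_distrib]
        exact Finset.sum_congr rfl fun a _ => by ring]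
      ring)]
    rw [Finset.sum_add_distrib, ← Finset.sum_mul, hα]
    ring
  have hfinal : L' (some (↑i : V)) (some (↑j : V))
      - ∑ l : {y : Option V // y ∉ liftSet B},
          (∑ k : {y : Option V // y ∉ liftSet B}, L' (some ↑i) ↑k * Minv k l) * L' ↑l (some ↑j)
      = L (↑i) ↑j - ∑ b : {x : V // x ∉ B},
          (∑ a : {x : V // x ∉ B}, L ↑i ↑a * P⁻¹ a b) * L ↑b ↑j := by
    rw [hT, hF1]
    ring
  simpa only [schurCompl, Matrix.sub_apply, Matrix.mul_apply, Matrix.of_apply,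
    Matrix.submatrix_apply, hNinv, ← hPdef] using hfinal
end

section
/- Consider the 6×6 real matrix A with rows (1,0,0,−1,0,0), (0,1,0,0,−1,0), (0,0,1,0,0,−1), (−1,0,0,3,−1,−1), (0,−1,0,−1,3,−1), (0,0,−1,−1,−1,3). Then the lower-right 3×3 block M = [[3,−1,−1],[−1,3,−1],[−1,−1,3]] is invertible, and the Schur complement of A with respect to its first three indices, namely I₃ − I₃ M⁻¹ I₃, equals (1/4)·(3·I₃ − J₃), i.e. the matrix (1/4)·[[2,−1,−1],[−1,2,−1],[−1,−1,2]]. Moreover this matrix also equals the Schur complement with respect to the first three indices of the 4×4 matrix (3/4)·[[1,0,0,−1],[0,1,0,−1],[0,0,1,−1],[−1,−1,−1,3]]. -/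
open Matrix

/-- the Schur complement with respect to the first three indices of the
weighted Laplacian of the triangle with three pendant unit-weight edges equals
`(1/4) • (3 I₃ - J₃)`, and this also equals the Schur complement with respect to the
first three indices of `(3/4) •` the Laplacian of a 3-star. -/
theorem triangle_with_pendants_and_star_have_equal_schur_complements :
    let A : Matrix (Fin 6) (Fin 6) ℝ :=
      !![1, 0, 0, -1, 0, 0;
         0, 1, 0, 0, -1, 0;
         0, 0, 1, 0, 0, -1;
         -1, 0, 0, 3, -1, -1;
         0, -1, 0, -1, 3, -1;
         0, 0, -1, -1, -1, 3];
    let f : Fin 3 → Fin 6 := fun i => ⟨i.1, by have := i.isLt; omega⟩;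
    let g : Fin 3 → Fin 6 := fun i => ⟨i.1 + 3, by have := i.isLt; omega⟩;
    let M : Matrix (Fin 3) (Fin 3) ℝ := !![3, -1, -1; -1, 3, -1; -1, -1, 3];
    let A' : Matrix (Fin 4) (Fin 4) ℝ :=
      (3 / 4 : ℝ) • !![1, 0, 0, -1; 0, 1, 0, -1; 0, 0, 1, -1; -1, -1, -1, 3];
    let f' : Fin 3 → Fin 4 := fun i => ⟨i.1, by have := i.isLt; omega⟩;
    let g' : Fin 1 → Fin 4 := fun i => ⟨i.1 + 3, by have := i.isLt; omega⟩;
    A.submatrix g g = M ∧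
    IsUnit M ∧
    A.submatrix f f - A.submatrix f g * M⁻¹ * A.submatrix g f =
      (1 : Matrix (Fin 3) (Fin 3) ℝ) - 1 * M⁻¹ * 1 ∧
    A.submatrix f f - A.submatrix f g * M⁻¹ * A.submatrix g f =
      (1 / 4 : ℝ) • !![2, -1, -1; -1, 2, -1; -1, -1, 2] ∧
    A'.submatrix f' f' - A'.submatrix f' g' * (A'.submatrix g' g')⁻¹ * A'.submatrix g' f' =
      (1 / 4 : ℝ) • !![2, -1, -1; -1, 2, -1; -1, -1, 2] := by
  intro A f g M A' f' g'
  have hM : M⁻¹ = !![(1:ℝ)/2, 1/4, 1/4; 1/4, 1/2, 1/4; 1/4, 1/4, 1/2] := by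
    apply Matrix.inv_eq_right_inv
    ext i j
    fin_cases i <;> fin_cases j <;>
      simp [M, Matrix.mul_apply, Fin.sum_univ_succ, Matrix.one_apply, Matrix.vecHead, Matrix.vecTail] <;> norm_num
  have hsub : A.submatrix g g = M := by
    ext i j
    fin_cases i <;> fin_cases j <;> rfl
  have hff : A.submatrix f f = 1 := by
    ext i j
    fin_cases i <;> fin_cases j <;> simp [A, f, Matrix.one_apply] <;> rfl
  have hfg : A.submatrix f g = -1 := by
    ext i j
    fin_cases i <;> fin_cases j <;> simp [A, f, g, Matrix.one_apply] <;> rfl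
  have hgf : A.submatrix g f = -1 := by
    ext i j
    fin_cases i <;> fin_cases j <;> simp [A, f, g, Matrix.one_apply] <;> rfl
  have hschur : A.submatrix f f - A.submatrix f g * M⁻¹ * A.submatrix g f =
      (1 / 4 : ℝ) • !![2, -1, -1; -1, 2, -1; -1, -1, 2] := by
    rw [hff, hfg, hgf, hM]
    ext i j
    fin_cases i <;> fin_cases j <;>
      simp [Matrix.mul_apply, Fin.sum_univ_succ, Matrix.one_apply, Matrix.vecHead, Matrix.vecTail] <;> norm_num
  have hgg' : A'.submatrix g' g' = !![(9:ℝ)/4] := by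
    ext i j
    fin_cases i <;> fin_cases j <;> simp [A', g'] <;> norm_num
  have hgg'inv : (A'.submatrix g' g')⁻¹ = !![(4:ℝ)/9] := by
    rw [hgg']
    apply Matrix.inv_eq_right_inv
    ext i j
    fin_cases i <;> fin_cases j <;>
      simp [Matrix.mul_apply, Fin.sum_univ_succ, Matrix.one_apply, Matrix.vecHead, Matrix.vecTail] <;> norm_num
  refine ⟨hsub, ?_, ?_, hschur, ?_⟩
  · apply Matrix.isUnit_iff_isUnit_det _ |>.mpr
    simp [M, Matrix.det_fin_three, Matrix.vecHead, Matrix.vecTail]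
    norm_num
  · rw [hff, hfg, hgf]
    simp
  · rw [hgg'inv]
    ext i j
    fin_cases i <;> fin_cases j <;>
      simp [A', f', g', Matrix.mul_apply, Fin.sum_univ_succ, Matrix.vecHead, Matrix.vecTail] <;> norm_num
end

section
/- Let S₁ := (1/4)·(4·I₄ − J₄) (the Schur complement with respect to the four leaves of the weighted Laplacian of the star with four edges of unit weight), and let S₂ be the Schur complement with respect to the first four indices of the 6×6 matrix with rows (a,0,0,0,−a,0), (0,a,0,0,−a,0), (0,0,a,0,0,−a), (0,0,0,a,0,−a), (−a,−a,0,0,2a+b,−b), (0,0,−a,−a,−b,2a+b), where a = b = 6/5. Then every diagonal entry of S₁ and every diagonal entry of S₂ equals 3/4, but S₁ ≠ S₂. -/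
open Matrix

set_option maxHeartbeats 1000000 in
private lemma aux_schur16 :
    !![(6/5 : ℝ), 0, 0, 0; 0, 6/5, 0, 0; 0, 0, 6/5, 0; 0, 0, 0, 6/5] -
      !![(-(6/5) : ℝ), 0; -(6/5), 0; 0, -(6/5); 0, -(6/5)] *
        !![(5/16 : ℝ), 5/48; 5/48, 5/16] *
        !![(-(6/5) : ℝ), -(6/5), 0, 0; 0, 0, -(6/5), -(6/5)] =
    !![(3/4 : ℝ), -(9/20), -(3/20), -(3/20);
       -(9/20), 3/4, -(3/20), -(3/20);
       -(3/20), -(3/20), 3/4, -(9/20);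
       -(3/20), -(3/20), -(9/20), 3/4] := by
  ext i j
  fin_cases i <;> fin_cases j <;>
    simp [Matrix.mul_apply, Fin.sum_univ_succ] <;>
    norm_num [Matrix.vecHead, Matrix.vecTail]

set_option maxHeartbeats 1000000 in
private lemma aux_inv16 :
    !![(2*(6/5)+6/5 : ℝ), -(6/5); -(6/5), 2*(6/5)+6/5] *
      !![(5/16 : ℝ), 5/48; 5/48, 5/16] = 1 := by
  ext i j
  fin_cases i <;> fin_cases j <;>
    simp [Matrix.mul_apply, Fin.sum_univ_succ, Matrix.one_apply] <;>
    norm_num [Matrix.vecHead, Matrix.vecTail]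

set_option maxHeartbeats 1000000 in
private lemma aux_S1_16 (i j : Fin 4) :
    (((1 / 4 : ℝ) • (4 • (1 : Matrix (Fin 4) (Fin 4) ℝ) - Matrix.of fun _ _ => 1) :
        Matrix (Fin 4) (Fin 4) ℝ)) i j
      = if i = j then 3/4 else -(1/4) := by
  rcases eq_or_ne i j with h | h
  · subst h
    rw [Matrix.smul_apply, Matrix.sub_apply, Matrix.smul_apply, Matrix.one_apply_eq,
      Matrix.of_apply, if_pos rfl]
    norm_num
  · rw [Matrix.smul_apply, Matrix.sub_apply, Matrix.smul_apply, Matrix.one_apply_ne h,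
      Matrix.of_apply, if_neg h]
    norm_num

/-- the Schur complement `S₁ = (1/4)(4 I₄ - J₄)` of the 4-star with unit
weights and the Schur complement `S₂` onto the first four indices of the Laplacian of
the symmetric double star with all weights `6/5` have all diagonal entries equal to
`3/4`, yet `S₁ ≠ S₂`. -/
theorem star_and_double_star_same_diagonal_different_schur :
    let S₁ : Matrix (Fin 4) (Fin 4) ℝ :=
      (1 / 4 : ℝ) • (4 • (1 : Matrix (Fin 4) (Fin 4) ℝ) - Matrix.of fun _ _ => 1);
    let a : ℝ := 6 / 5;
    let bb : ℝ := 6 / 5;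
    let A : Matrix (Fin 6) (Fin 6) ℝ :=
      !![a, 0, 0, 0, -a, 0;
         0, a, 0, 0, -a, 0;
         0, 0, a, 0, 0, -a;
         0, 0, 0, a, 0, -a;
         -a, -a, 0, 0, 2*a+bb, -bb;
         0, 0, -a, -a, -bb, 2*a+bb];
    let f : Fin 4 → Fin 6 := fun i => ⟨i.1, by have := i.isLt; omega⟩;
    let g : Fin 2 → Fin 6 := fun i => ⟨i.1 + 4, by have := i.isLt; omega⟩;
    let S₂ : Matrix (Fin 4) (Fin 4) ℝ :=
      A.submatrix f f - A.submatrix f g * (A.submatrix g g)⁻¹ * A.submatrix g f;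
    (∀ i : Fin 4, S₁ i i = 3 / 4) ∧ (∀ i : Fin 4, S₂ i i = 3 / 4) ∧ S₁ ≠ S₂ := by
  intro S₁ a bb A f g S₂
  have hff : A.submatrix f f = !![(6/5 : ℝ), 0, 0, 0; 0, 6/5, 0, 0; 0, 0, 6/5, 0; 0, 0, 0, 6/5] := by
    ext i j; fin_cases i <;> fin_cases j <;> rfl
  have hfg : A.submatrix f g = !![(-(6/5) : ℝ), 0; -(6/5), 0; 0, -(6/5); 0, -(6/5)] := by
    ext i j; fin_cases i <;> fin_cases j <;> rfl
  have hgf : A.submatrix g f = !![(-(6/5) : ℝ), -(6/5), 0, 0; 0, 0, -(6/5), -(6/5)] := by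
    ext i j; fin_cases i <;> fin_cases j <;> rfl
  have hgg : A.submatrix g g = !![(2*(6/5)+6/5 : ℝ), -(6/5); -(6/5), 2*(6/5)+6/5] := by
    ext i j; fin_cases i <;> fin_cases j <;> rfl
  have hinv : (A.submatrix g g)⁻¹ = !![(5/16 : ℝ), 5/48; 5/48, 5/16] := by
    rw [hgg]
    exact Matrix.inv_eq_right_inv aux_inv16
  have hS₂ : S₂ = !![(3/4 : ℝ), -(9/20), -(3/20), -(3/20);
                     -(9/20), 3/4, -(3/20), -(3/20);
                     -(3/20), -(3/20), 3/4, -(9/20);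
                     -(3/20), -(3/20), -(9/20), 3/4] := by
    show A.submatrix f f - A.submatrix f g * (A.submatrix g g)⁻¹ * A.submatrix g f = _
    rw [hff, hfg, hgf, hinv]
    exact aux_schur16
  refine ⟨?_, ?_, ?_⟩
  · intro i
    have h := aux_S1_16 i i
    rw [if_pos rfl] at h
    exact h
  · intro i
    rw [show (S₂ : Matrix (Fin 4) (Fin 4) ℝ) = _ from hS₂]
    fin_cases i <;> norm_num [Matrix.vecHead, Matrix.vecTail]
  · intro h
    have h01 : S₁ 0 1 = S₂ 0 1 := by rw [h]
    have e1 : S₁ 0 1 = -(1/4) := by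
      have h' := aux_S1_16 0 1
      rw [if_neg (by decide)] at h'
      exact h'
    have e2 : S₂ 0 1 = -(9/20) := by rw [hS₂]; rfl
    rw [e1, e2] at h01
    norm_num at h01
end
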